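/- arXiv:1611.00029 — 3 statements merged into one kernel-verified Lean document; each statement's English description precedes it below -/
import Mathlib

section
/- For every leafless connected multigraph G with a set M of i marked edges, there exists a leafless connected subgraph H of G with cyclomatic number at most i+1 that contains all i marked edges. -/
/-!
Multigraphs are modeled by a map `ends : E → Sym2 V` assigning to each edge its
pair of endpoints.  Subgraphs are given by subsets `F : Finset E` of edges
(together with their incident vertices; isolated vertices are disregarded).
-/

open Finset

variable {V E : Type*}

-- Vertices incident to at least one edge of `F` (isolated vertices disregarded).
open Classical in
noncomputable def vertsOf [Fintype V] (ends : E → Sym2 V) (F : Finset E) : Finset V :=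
  Finset.univ.filter fun v => ∃ e ∈ F, v ∈ ends e

-- Degree of `v` in the multigraph with edge set `F` (loops count twice).
open Classical in
noncomputable def degIn (ends : E → Sym2 V) (F : Finset E) (v : V) : ℕ :=
  2 * (F.filter fun e => ends e = s(v, v)).card +
    (F.filter fun e => v ∈ ends e ∧ ends e ≠ s(v, v)).card

/-- Adjacency via an edge of `F`. -/
def adjIn (ends : E → Sym2 V) (F : Finset E) (v w : V) : Prop :=
  ∃ e ∈ F, ends e = s(v, w)

/-- The multigraph with edge set `F` is connected (on its non-isolated vertices). -/
def connIn [Fintype V] (ends : E → Sym2 V) (F : Finset E) : Prop :=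
  ∀ v ∈ vertsOf ends F, ∀ w ∈ vertsOf ends F, Relation.ReflTransGen (adjIn ends F) v w

/-- The multigraph with edge set `F` has no vertex of degree 1. -/
def leaflessIn [Fintype V] (ends : E → Sym2 V) (F : Finset E) : Prop :=
  ∀ v ∈ vertsOf ends F, degIn ends F v ≠ 1

/-- Cyclomatic number of a connected multigraph with edge set `F`:
`#edges - #vertices + 1`. -/
noncomputable def cyclomatic [Fintype V] (ends : E → Sym2 V) (F : Finset E) : ℤ :=
  (F.card : ℤ) - (vertsOf ends F).card + 1

section Part1
variable [Fintype V] [DecidableEq V] [DecidableEq E] (ends : E → Sym2 V)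

set_option linter.unusedSectionVars false

lemma sym2_exists (z : Sym2 V) : ∃ x y, z = s(x, y) :=
  Sym2.ind (f := fun z => ∃ x y, z = s(x, y)) (fun x y => ⟨x, y, rfl⟩) z

lemma degIn_eq (F : Finset E) (v : V) :
    degIn ends F v = 2 * (F.filter fun e => ends e = s(v, v)).card +
      (F.filter fun e => v ∈ ends e ∧ ends e ≠ s(v, v)).card := by
  unfold degIn
  congr

lemma mem_vertsOf {F : Finset E} {v : V} : v ∈ vertsOf ends F ↔ ∃ e ∈ F, v ∈ ends e := by
  simp [vertsOf]

lemma mem_vertsOf_of_mem {F : Finset E} {e : E} {v : V} (he : e ∈ F) (hv : v ∈ ends e) :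
    v ∈ vertsOf ends F := mem_vertsOf ends |>.2 ⟨e, he, hv⟩

lemma vertsOf_union (A B : Finset E) :
    vertsOf ends (A ∪ B) = vertsOf ends A ∪ vertsOf ends B := by
  ext v; simp only [mem_vertsOf, Finset.mem_union]; aesop

lemma vertsOf_mono {A B : Finset E} (h : A ⊆ B) : vertsOf ends A ⊆ vertsOf ends B := by
  intro v hv; rw [mem_vertsOf] at *; obtain ⟨e, he, hv⟩ := hv; exact ⟨e, h he, hv⟩

@[simp] lemma vertsOf_empty : vertsOf ends (∅ : Finset E) = ∅ := by
  ext v; simp [mem_vertsOf]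

lemma vertsOf_nonempty {F : Finset E} (h : F.Nonempty) : (vertsOf ends F).Nonempty := by
  classical
  obtain ⟨e, he⟩ := h
  obtain ⟨x, y, hxy⟩ := sym2_exists (ends e)
  exact ⟨x, mem_vertsOf_of_mem ends he (by rw [hxy]; simp)⟩

lemma degIn_union {A B : Finset E} (h : Disjoint A B) (v : V) :
    degIn ends (A ∪ B) v = degIn ends A v + degIn ends B v := by
  classical
  rw [degIn_eq, degIn_eq, degIn_eq]
  rw [Finset.filter_union, Finset.filter_union,
    Finset.card_union_of_disjoint (Finset.disjoint_filter_filter h),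
    Finset.card_union_of_disjoint (Finset.disjoint_filter_filter h)]
  ring

lemma degIn_singleton_loop {e : E} {v : V} (h : ends e = s(v, v)) :
    degIn ends {e} v = 2 := by
  classical
  rw [degIn_eq]
  rw [Finset.filter_singleton, Finset.filter_singleton]
  simp [h]

lemma degIn_singleton_nonloop {e : E} {v w : V} (h : ends e = s(v, w)) (hvw : v ≠ w) :
    degIn ends {e} v = 1 := by
  classical
  rw [degIn_eq]
  rw [Finset.filter_singleton, Finset.filter_singleton]
  have h1 : ends e ≠ s(v, v) := by
    rw [h]; intro hc; rw [Sym2.eq_iff] at hc; tauto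
  have h2 : v ∈ ends e := by rw [h]; simp
  simp [h1, h2]

lemma degIn_singleton_not_mem {e : E} {v : V} (h : v ∉ ends e) :
    degIn ends {e} v = 0 := by
  classical
  rw [degIn_eq]
  rw [Finset.filter_singleton, Finset.filter_singleton]
  have h1 : ends e ≠ s(v, v) := by intro hc; apply h; rw [hc]; simp
  simp [h1, h]

lemma one_le_degIn_of_mem {F : Finset E} {v : V} (h : v ∈ vertsOf ends F) :
    1 ≤ degIn ends F v := by
  classical
  rw [mem_vertsOf] at h
  obtain ⟨e, he, hv⟩ := h
  rw [degIn_eq]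
  by_cases hl : ends e = s(v, v)
  · have : e ∈ F.filter fun e => ends e = s(v, v) := by simp [he, hl]
    have := Finset.card_pos.mpr ⟨e, this⟩
    omega
  · have : e ∈ F.filter fun e => v ∈ ends e ∧ ends e ≠ s(v, v) := by simp [he, hv, hl]
    have := Finset.card_pos.mpr ⟨e, this⟩
    omega

lemma mem_vertsOf_of_one_le_degIn {F : Finset E} {v : V} (h : 1 ≤ degIn ends F v) :
    v ∈ vertsOf ends F := by
  classical
  rw [degIn_eq] at h
  rw [mem_vertsOf]
  by_cases h1 : (F.filter fun e => ends e = s(v, v)).Nonempty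
  · obtain ⟨e, he⟩ := h1
    simp only [Finset.mem_filter] at he
    exact ⟨e, he.1, by rw [he.2]; simp⟩
  · rw [Finset.not_nonempty_iff_eq_empty] at h1
    rw [h1] at h
    simp only [Finset.card_empty, Nat.mul_zero, Nat.zero_add] at h
    obtain ⟨e, he⟩ := Finset.card_pos.mp h
    simp only [Finset.mem_filter] at he
    exact ⟨e, he.1, he.2.1⟩

lemma degIn_mono {A B : Finset E} (h : A ⊆ B) (v : V) : degIn ends A v ≤ degIn ends B v := by
  classical
  rw [degIn_eq, degIn_eq]
  have h1 := Finset.card_le_card (Finset.filter_subset_filter (fun e => ends e = s(v, v)) h)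
  have h2 := Finset.card_le_card
    (Finset.filter_subset_filter (fun e => v ∈ ends e ∧ ends e ≠ s(v, v)) h)
  omega

lemma two_le_degIn_of_leafless {F : Finset E} (hl : leaflessIn ends F) {v : V}
    (h : v ∈ vertsOf ends F) : 2 ≤ degIn ends F v := by
  have := one_le_degIn_of_mem ends h
  have := hl v h
  omega

lemma adjIn_symm {F : Finset E} {v w : V} (h : adjIn ends F v w) : adjIn ends F w v := by
  obtain ⟨e, he, hvw⟩ := h
  exact ⟨e, he, by rw [hvw]; exact Sym2.eq_swap⟩

lemma reach_symm {F : Finset E} {v w : V}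
    (h : Relation.ReflTransGen (adjIn ends F) v w) :
    Relation.ReflTransGen (adjIn ends F) w v := by
  induction h with
  | refl => exact Relation.ReflTransGen.refl
  | tail _ hstep ih =>
      exact Relation.ReflTransGen.trans (Relation.ReflTransGen.single (adjIn_symm ends hstep)) ih

lemma reach_mono {A B : Finset E} (h : A ⊆ B) {v w : V}
    (hr : Relation.ReflTransGen (adjIn ends A) v w) :
    Relation.ReflTransGen (adjIn ends B) v w := by
  refine Relation.ReflTransGen.mono ?_ _ _ hr
  intro a b ⟨e, he, hab⟩
  exact ⟨e, h he, hab⟩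

lemma edge_mem_vertsOf {F : Finset E} {e : E} (he : e ∈ F) {u : V} (hu : u ∈ ends e) :
    u ∈ vertsOf ends F := mem_vertsOf_of_mem ends he hu

end Part1


section Part2
variable [Fintype V] [DecidableEq V] [DecidableEq E] (ends : E → Sym2 V)
set_option linter.unusedSectionVars false

/-- A chain (walk) from `a` to `b` with vertex list `vs` and edge list `es`. -/
inductive ChainW : V → List V → List E → V → Prop
  | nil (v : V) : ChainW v [v] [] v
  | cons {v w u : V} {vs : List V} {es : List E} (e : E) (h : ends e = s(v, w))
      (t : ChainW w vs es u) : ChainW v (v :: vs) (e :: es) u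

lemma ChainW.head_mem {a b vs es} (h : ChainW ends a vs es b) : a ∈ vs := by
  cases h <;> simp

lemma ChainW.last_mem {a b vs es} (h : ChainW ends a vs es b) : b ∈ vs := by
  induction h with
  | nil => simp
  | cons e he t ih => simp [ih]

lemma ChainW.length_eq {a b vs es} (h : ChainW ends a vs es b) : vs.length = es.length + 1 := by
  induction h with
  | nil => simp
  | cons e he t ih => simp [ih]

lemma ChainW.nil_inv {a b vs} (h : ChainW ends a vs [] b) : a = b ∧ vs = [a] := by
  cases h; exact ⟨rfl, rfl⟩

lemma ChainW.edge_ends_mem {a b vs es} (h : ChainW ends a vs es b) {e : E} (he : e ∈ es)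
    {u : V} (hu : u ∈ ends e) : u ∈ vs := by
  induction h with
  | nil => simp at he
  | cons e' he' t ih =>
      rcases List.mem_cons.mp he with rfl | he2
      · rw [he'] at hu
        rcases Sym2.mem_iff.mp hu with rfl | rfl
        · simp
        · simp [t.head_mem]
      · exact List.mem_cons.mpr (Or.inr (ih he2))

lemma ChainW.last_mem_tail {a b vs es} (h : ChainW ends a vs es b) (hne : es ≠ []) :
    b ∈ vs.tail := by
  cases h with
  | nil => simp at hne
  | cons e he t => simpa using t.last_mem

lemma ChainW.no_loops {a b vs es} (h : ChainW ends a vs es b) (hnd : vs.Nodup) {e : E}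
    (he : e ∈ es) (w : V) : ends e ≠ s(w, w) := by
  induction h with
  | nil => simp at he
  | cons e' he' t ih =>
      rcases List.mem_cons.mp he with rfl | he2
      · intro hc
        rw [hc] at he'
        rw [Sym2.eq_iff] at he'
        have hvw : _ ∈ _ := t.head_mem
        rcases he' with ⟨h1, h2⟩ | ⟨h1, h2⟩ <;>
          · subst h1; subst h2
            simp only [List.nodup_cons] at hnd
            exact hnd.1 hvw
      · exact ih (List.nodup_cons.mp hnd).2 he2

lemma ChainW.edges_nodup {a b vs es} (h : ChainW ends a vs es b) (hnd : vs.Nodup) :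
    es.Nodup := by
  induction h with
  | nil => simp
  | cons e he t ih =>
      rename_i v0 w u vs2 es2
      simp only [List.nodup_cons] at hnd ⊢
      refine ⟨fun hmem => ?_, ih hnd.2⟩
      exact hnd.1 (t.edge_ends_mem ends (u := v0) hmem (by rw [he]; simp))

lemma ChainW.mem_vertsOf_iff {a b vs es} (h : ChainW ends a vs es b) (hne : es ≠ []) (v : V) :
    v ∈ vertsOf ends es.toFinset ↔ v ∈ vs := by
  constructor
  · intro hv
    rw [mem_vertsOf] at hv
    obtain ⟨e, he, hv⟩ := hv
    exact h.edge_ends_mem ends (List.mem_toFinset.mp he) hv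
  · intro hv
    induction h with
    | nil => simp at hne
    | cons e he t ih =>
        rename_i v0 w u vs2 es2
        rcases List.mem_cons.mp hv with rfl | hv2
        · exact mem_vertsOf_of_mem ends (e := e) (by simp) (by rw [he]; simp)
        · rcases eq_or_ne es2 [] with rfl | hne2
          · obtain ⟨rfl, rfl⟩ := t.nil_inv ends
            rcases List.mem_singleton.mp hv2 with rfl
            exact mem_vertsOf_of_mem ends (e := e) (by simp) (by rw [he]; simp)
          · refine vertsOf_mono ends (fun z hz => ?_) (ih hne2 hv2)
            simp only [List.mem_toFinset] at hz ⊢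
            simp at hz ⊢
            tauto

lemma ChainW.verts_subset {a b vs es} (h : ChainW ends a vs es b) :
    ∀ v ∈ vertsOf ends es.toFinset, v ∈ vs := by
  intro v hv
  rw [mem_vertsOf] at hv
  obtain ⟨e, he, hv⟩ := hv
  exact h.edge_ends_mem ends (List.mem_toFinset.mp he) hv

/-- Degree of each chain vertex inside the chain's edges. -/
lemma ChainW.deg {a b vs es} (h : ChainW ends a vs es b) (hnd : vs.Nodup) :
    ∀ v ∈ vs, degIn ends es.toFinset v =
      (if v = a then 0 else 1) + (if v = b then 0 else 1) := by
  induction h with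
  | nil =>
      intro v hv
      rcases List.mem_singleton.mp hv with rfl
      simp [degIn_eq]
  | cons e he t ih =>
      rename_i v0 w u vs' es'
      intro v hv
      simp only [List.nodup_cons] at hnd
      have hnotin : e ∉ es'.toFinset := by
        intro hmem
        exact hnd.1 (t.edge_ends_mem ends (List.mem_toFinset.mp hmem) (by rw [he]; simp))
      have hsplit : (e :: es').toFinset = {e} ∪ es'.toFinset := by
        rw [List.toFinset_cons, Finset.insert_eq]
      have hdisj : Disjoint ({e} : Finset E) es'.toFinset := by
        simpa using hnotin
      have hv0w : v0 ≠ w := by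
        intro hc; subst hc; exact hnd.1 t.head_mem
      have hwvs : w ∈ vs' := t.head_mem
      have hbvs : u ∈ vs' := t.last_mem
      rw [hsplit, degIn_union ends hdisj]
      rcases List.mem_cons.mp hv with rfl | hv2
      · -- v = v0 : head
        have hd1 : degIn ends {e} v = 1 := degIn_singleton_nonloop ends he hv0w
        have hd2 : degIn ends es'.toFinset v = 0 := by
          by_contra hc
          have : v ∈ vertsOf ends es'.toFinset :=
            mem_vertsOf_of_one_le_degIn ends (by omega)
          exact hnd.1 (t.verts_subset ends v this)
        have hvb : v ≠ u := fun hc => hnd.1 (hc ▸ hbvs)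
        simp [hd1, hd2, hvb]
      · -- v in tail
        have hva : v ≠ v0 := fun hc => hnd.1 (hc ▸ hv2)
        have hd2 := ih hnd.2 v hv2
        have hd1 : degIn ends {e} v = if v = w then 1 else 0 := by
          by_cases hvw : v = w
          · subst hvw; simp [degIn_singleton_nonloop ends (by rw [he, Sym2.eq_swap]) (Ne.symm hv0w)]
          · refine if_neg hvw ▸ degIn_singleton_not_mem ends ?_
            rw [he]; simp [hva, hvw]
        rw [hd1, hd2]
        have hwv0 : w ≠ v0 := Ne.symm hv0w
        by_cases hvw : v = w <;> by_cases hvb : v = u <;>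
          simp [hvw, hvb, hva] <;> simp_all <;> omega
  
lemma ChainW.reach {a b vs es} (h : ChainW ends a vs es b) :
    ∀ v ∈ vs, Relation.ReflTransGen (adjIn ends es.toFinset) a v := by
  induction h with
  | nil =>
      intro v hv; rcases List.mem_singleton.mp hv with rfl; exact Relation.ReflTransGen.refl
  | cons e he t ih =>
      rename_i v0 w u vs' es'
      intro v hv
      rcases List.mem_cons.mp hv with rfl | hv2
      · exact Relation.ReflTransGen.refl
      · have step : adjIn ends (e :: es').toFinset v0 w := ⟨e, by simp, he⟩
        refine Relation.ReflTransGen.head step (reach_mono ends (fun z hz => ?_) (ih v hv2))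
        simp at hz ⊢; tauto

/-- Suffix of a chain starting from any of its vertices. -/
lemma ChainW.suffix_from {a b vs es} (h : ChainW ends a vs es b) {x : V} (hx : x ∈ vs) :
    ∃ vs' es', ChainW ends x vs' es' b ∧ vs'.Sublist vs ∧ es'.Sublist es := by
  induction h with
  | nil =>
      rcases List.mem_singleton.mp hx with rfl
      exact ⟨[x], [], ChainW.nil x, by simp, by simp⟩
  | cons e he t ih =>
      rename_i v0 w u vs' es'
      rcases List.mem_cons.mp hx with rfl | hx2
      · exact ⟨x :: vs', e :: es', ChainW.cons e he t, List.Sublist.refl _, List.Sublist.refl _⟩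
      · obtain ⟨vs2, es2, hc, hsub1, hsub2⟩ := ih hx2
        exact ⟨vs2, es2, hc, hsub1.cons _, hsub2.cons _⟩

/-- Extend a chain by one edge at the end. -/
lemma ChainW.snoc {a b vs es} (h : ChainW ends a vs es b) {f : E} {c : V}
    (hf : ends f = s(b, c)) : ChainW ends a (vs ++ [c]) (es ++ [f]) c := by
  induction h with
  | nil => exact ChainW.cons f hf (ChainW.nil c)
  | cons e he t ih => exact ChainW.cons e he (ih hf)

/-- Truncation of a chain at the first vertex of `W`, where the head avoids `W`
but the end lies in `W`.  Returns an initial piece fully outside `W` together with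
the first crossing edge. -/
lemma ChainW.truncate {a b vs es} (h : ChainW ends a vs es b) {W : Finset V}
    (ha : a ∉ W) (hb : b ∈ W) :
    ∃ c vs' es' f u, ChainW ends a vs' es' c ∧ (∀ v ∈ vs', v ∉ W) ∧
      ends f = s(c, u) ∧ u ∈ W ∧ vs'.Sublist vs ∧ (es' ++ [f]).Sublist es := by
  induction h with
  | nil => exact absurd hb ha
  | cons e he t ih =>
      rename_i v0 w u vs' es'
      by_cases hw : w ∈ W
      · exact ⟨v0, [v0], [], e, w, ChainW.nil v0, by simpa using ha, he, hw,
          by simp, by simp⟩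
      · obtain ⟨c, vs2, es2, f, u2, hc, hout, hf, hu2, hsub1, hsub2⟩ := ih hw hb
        exact ⟨c, v0 :: vs2, e :: es2, f, u2, ChainW.cons e he hc,
          by intro v hv; rcases List.mem_cons.mp hv with rfl | hv2; exact ha; exact hout v hv2,
          hf, hu2, hsub1.cons₂ _, hsub2.cons₂ _⟩

end Part2


section Part3
variable [Fintype V] [Fintype E] [DecidableEq V] [DecidableEq E] (ends : E → Sym2 V)
set_option linter.unusedSectionVars false

/-- From reachability, extract a simple (nodup) path. -/
lemma exists_path {F : Finset E} {a b : V}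
    (h : Relation.ReflTransGen (adjIn ends F) a b) :
    ∃ vs es, ChainW ends a vs es b ∧ vs.Nodup ∧ ∀ e ∈ es, e ∈ F := by
  induction h using Relation.ReflTransGen.head_induction_on with
  | refl => exact ⟨[b], [], ChainW.nil b, by simp, by simp⟩
  | head hstep _ ih =>
      rename_i a' c _
      obtain ⟨vs, es, hc, hnd, hes⟩ := ih
      obtain ⟨e, heF, he⟩ := hstep
      by_cases ha : a' ∈ vs
      · obtain ⟨vs', es', hc', hsub1, hsub2⟩ := hc.suffix_from ends ha
        exact ⟨vs', es', hc', hsub1.nodup hnd, fun e' he' => hes e' (hsub2.mem he')⟩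
      · exact ⟨a' :: vs, e :: es, ChainW.cons e he hc, List.nodup_cons.mpr ⟨ha, hnd⟩,
          fun e' he' => by
            rcases List.mem_cons.mp he' with rfl | h2
            · exact heF
            · exact hes e' h2⟩

/-- Grow a tentacle: starting from a chain out of `z` whose non-head vertices avoid
`vertsOf S` and whose edges avoid `S`, extend until we either hit `vertsOf S` again
or close a cycle. -/
lemma grow (hleafless : leaflessIn ends (Finset.univ : Finset E))
    (S : Finset E) (z : V) (hdegz : degIn ends S z = 1) :
    ∀ (n : ℕ) (c : V) (vs : List V) (es : List E),
      Fintype.card V - vs.length ≤ n →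
      ChainW ends z vs es c → vs.Nodup →
      (∀ v ∈ vs.tail, v ∉ vertsOf ends S) →
      (∀ e ∈ es, e ∉ S) →
      (∀ v ∈ vs, v ∈ vertsOf ends (Finset.univ : Finset E)) →
      ∃ c' vs' es' f u, ChainW ends z vs' es' c' ∧ vs'.Nodup ∧
        (∀ v ∈ vs'.tail, v ∉ vertsOf ends S) ∧ (∀ e ∈ es', e ∉ S) ∧
        f ∉ S ∧ f ∉ es' ∧ ends f = s(c', u) ∧
        ((u ∈ vertsOf ends S ∧ u ≠ z) ∨ u ∈ vs') := by
  intro n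
  induction n using Nat.strong_induction_on with
  | _ n ih =>
  intro c vs es hn hc hnd htail hes huniv
  classical
  have hcvs : c ∈ vs := hc.last_mem ends
  have hcuniv : c ∈ vertsOf ends (Finset.univ : Finset E) := huniv c hcvs
  have hdc : 2 ≤ degIn ends (Finset.univ : Finset E) c :=
    two_le_degIn_of_leafless ends hleafless hcuniv
  -- key counting facts about edges at `c` already used
  have hkey : ((S ∪ es.toFinset).filter fun e => c ∈ ends e ∧ ends e ≠ s(c, c)).card ≤ 1 ∧
      (∀ f : E, ends f = s(c, c) → f ∉ S) := by
    rcases eq_or_ne es [] with rfl | hne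
    · obtain ⟨hzc, hvs⟩ := hc.nil_inv ends
      subst hzc
      have h1 := degIn_eq ends S z
      rw [hdegz] at h1
      constructor
      · have h2 : (S ∪ ([] : List E).toFinset) = S := by simp
        rw [h2]
        omega
      · intro f hf hfS
        have h3 : f ∈ S.filter fun e => ends e = s(z, z) := by
          simp only [Finset.mem_filter]; exact ⟨hfS, hf⟩
        have := Finset.card_pos.mpr ⟨f, h3⟩
        omega
    · have hctail : c ∈ vs.tail := hc.last_mem_tail ends hne
      have hcS : c ∉ vertsOf ends S := htail c hctail
      have hzc : z ≠ c := by
        cases hc with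
        | nil => simp at hne
        | cons e he t =>
            intro hzc
            simp only [List.nodup_cons] at hnd
            exact hnd.1 (hzc ▸ hctail)
      have hSempty : ∀ e ∈ S, c ∉ ends e := fun e heS hce =>
        hcS (mem_vertsOf_of_mem ends heS hce)
      constructor
      · have hsub : ((S ∪ es.toFinset).filter fun e => c ∈ ends e ∧ ends e ≠ s(c, c)) ⊆
            es.toFinset.filter fun e => c ∈ ends e ∧ ends e ≠ s(c, c) := by
          intro e he'
          simp only [Finset.mem_filter, Finset.mem_union] at he' ⊢
          refine ⟨he'.1.resolve_left (fun heS => hSempty e heS he'.2.1), he'.2⟩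
        refine le_trans (Finset.card_le_card hsub) ?_
        have hdeg := hc.deg ends hnd c hcvs
        rw [if_neg (Ne.symm hzc), if_pos rfl] at hdeg
        have := degIn_eq ends es.toFinset c
        omega
      · exact fun f hf hfS => hSempty f hfS (by rw [hf]; simp)
  by_cases hloop : ∃ f : E, ends f = s(c, c)
  · -- a loop at c closes a cycle immediately
    obtain ⟨f, hf⟩ := hloop
    refine ⟨c, vs, es, f, c, hc, hnd, htail, hes, hkey.2 f hf, ?_, hf, Or.inr hcvs⟩
    exact fun hmem => hc.no_loops ends hnd hmem c hf
  · -- no loop at c : there are ≥ 2 incident non-loop edges, at most 1 used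
    push_neg at hloop
    have hcard2 : 2 ≤ ((Finset.univ : Finset E).filter
        fun e => c ∈ ends e ∧ ends e ≠ s(c, c)).card := by
      have h1 := degIn_eq ends (Finset.univ : Finset E) c
      have h2 : ((Finset.univ : Finset E).filter fun e => ends e = s(c, c)) = ∅ := by
        rw [Finset.filter_eq_empty_iff]
        exact fun e _ => hloop e
      rw [h2] at h1
      simp only [Finset.card_empty, Nat.mul_zero, Nat.zero_add] at h1
      omega
    have hnotsub : ¬ (((Finset.univ : Finset E).filter
        fun e => c ∈ ends e ∧ ends e ≠ s(c, c)) ⊆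
        ((S ∪ es.toFinset).filter fun e => c ∈ ends e ∧ ends e ≠ s(c, c))) := by
      intro hsub
      have := Finset.card_le_card hsub
      omega
    obtain ⟨f, hf1, hf2⟩ := Finset.not_subset.mp hnotsub
    simp only [Finset.mem_filter, Finset.mem_univ, true_and] at hf1
    have hfS : f ∉ S ∧ f ∉ es := by
      constructor
      · exact fun hmem => hf2 (Finset.mem_filter.mpr
          ⟨Finset.mem_union_left _ hmem, hf1.1, hf1.2⟩)
      · exact fun hmem => hf2 (Finset.mem_filter.mpr
          ⟨Finset.mem_union_right _ (List.mem_toFinset.mpr hmem), hf1.1, hf1.2⟩)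
    obtain ⟨w, hw⟩ := Sym2.mem_iff_exists.mp hf1.1
    have hwc : w ≠ c := by rintro rfl; exact hf1.2 hw
    by_cases hwvs : w ∈ vs
    · -- close a cycle
      exact ⟨c, vs, es, f, w, hc, hnd, htail, hes, hfS.1, hfS.2, hw, Or.inr hwvs⟩
    · by_cases hwS : w ∈ vertsOf ends S
      · -- land on S
        have hwz : w ≠ z := by rintro rfl; exact hwvs (hc.head_mem ends)
        exact ⟨c, vs, es, f, w, hc, hnd, htail, hes, hfS.1,
          fun hmem => hfS.2 hmem, hw, Or.inl ⟨hwS, hwz⟩⟩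
      · -- extend the chain
        have hlen : vs.length < Fintype.card V := by
          have h1 : (vs ++ [w]).Nodup := by
            simp [List.nodup_append, hnd, hwvs]
            intro a ha h; exact hwvs (h ▸ ha)
          have := h1.length_le_card
          simp at this
          omega
        have hn1 : 1 ≤ n := by omega
        have hc2 := hc.snoc ends hw
        refine ih (n - 1) (by omega) w (vs ++ [w]) (es ++ [f]) (by simp; omega) hc2 ?_ ?_ ?_ ?_
        · simp [List.nodup_append, hnd, hwvs]
          intro a ha h; exact hwvs (h ▸ ha)
        · intro v hv
          cases vs with
          | nil => cases hc
          | cons v0 vs0 =>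
              simp only [List.cons_append, List.tail_cons, List.mem_append,
                List.mem_singleton] at hv
              rcases hv with hv | rfl
              · exact htail v (by simpa using hv)
              · exact hwS
        · intro e he
          rcases List.mem_append.mp he with he | he
          · exact hes e he
          · rcases List.mem_singleton.mp he with rfl
            exact hfS.1
        · intro v hv
          rcases List.mem_append.mp hv with hv | hv
          · exact huniv v hv
          · rcases List.mem_singleton.mp hv with rfl
            exact mem_vertsOf_of_mem ends (Finset.mem_univ f) (by rw [hw]; simp)

end Part3


section Part4
variable [Fintype V] [Fintype E] [DecidableEq V] [DecidableEq E] (ends : E → Sym2 V)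
set_option linter.unusedSectionVars false

/-- Fixing a degree-1 vertex `z` of `S` by attaching a tentacle. -/
lemma tent (hleafless : leaflessIn ends (Finset.univ : Finset E))
    (S : Finset E) (z : V) (hz : degIn ends S z = 1) :
    ∃ A : Finset E, Disjoint A S ∧
      (A.card : ℤ) ≤ ((vertsOf ends (S ∪ A)).card : ℤ) - (vertsOf ends S).card + 1 ∧
      2 ≤ degIn ends (S ∪ A) z ∧
      (∀ v ∈ vertsOf ends A, v ∉ vertsOf ends S → 2 ≤ degIn ends (S ∪ A) v) ∧
      (∀ v ∈ vertsOf ends A, Relation.ReflTransGen (adjIn ends (S ∪ A)) v z) := by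
  classical
  have hzS : z ∈ vertsOf ends S := mem_vertsOf_of_one_le_degIn ends (by omega)
  have hzu : z ∈ vertsOf ends (Finset.univ : Finset E) :=
    vertsOf_mono ends (Finset.subset_univ S) hzS
  obtain ⟨c, vs, es, f, u, hchain, hnd, htail, hes, hfS, hfes, hf, hu⟩ :=
    grow ends hleafless S z hz (Fintype.card V) z [z] []
      (by simp) (ChainW.nil z) (by simp) (by simp) (by simp)
      (by intro v hv; rcases List.mem_singleton.mp hv with rfl; exact hzu)
  set A : Finset E := insert f es.toFinset with hA
  have hesnd : es.Nodup := hchain.edges_nodup ends hnd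
  have hfnotin : f ∉ es.toFinset := fun hmem => hfes (List.mem_toFinset.mp hmem)
  have hAcard : A.card = es.length + 1 := by
    rw [hA, Finset.card_insert_of_notMem hfnotin, List.toFinset_card_of_nodup hesnd]
  have hlen : vs.length = es.length + 1 := hchain.length_eq ends
  have hdisj : Disjoint A S := by
    rw [Finset.disjoint_left]
    intro e he
    rcases Finset.mem_insert.mp he with rfl | he2
    · exact hfS
    · exact hes e (List.mem_toFinset.mp he2)
  have hdisjfe : Disjoint ({f} : Finset E) es.toFinset := by simpa using hfnotin
  have hAsplit : A = {f} ∪ es.toFinset := by rw [hA, Finset.insert_eq]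
  have hheadz : z ∈ vs := hchain.head_mem ends
  -- membership analysis for vertices of A
  have hmemA : ∀ v ∈ vertsOf ends A, v ∈ vs ∨ v = u := by
    intro v hv
    rw [mem_vertsOf] at hv
    obtain ⟨e, he, hv⟩ := hv
    rcases Finset.mem_insert.mp he with rfl | he2
    · rw [hf] at hv
      rcases Sym2.mem_iff.mp hv with rfl | rfl
      · exact Or.inl (hchain.last_mem ends)
      · exact Or.inr rfl
    · exact Or.inl (hchain.edge_ends_mem ends (List.mem_toFinset.mp he2) hv)
  have hvsA : ∀ v ∈ vs, v ∈ vertsOf ends A := by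
    intro v hv
    rcases eq_or_ne es [] with rfl | hne
    · obtain ⟨hzc, hvs⟩ := hchain.nil_inv ends
      rw [hvs] at hv
      rcases List.mem_singleton.mp hv with rfl
      refine mem_vertsOf_of_mem ends (Finset.mem_insert_self f _) ?_
      rw [hf, ← hzc]; simp
    · exact vertsOf_mono ends (Finset.subset_insert _ _)
        ((hchain.mem_vertsOf_iff ends hne v).mpr hv)
  -- cardinality bound
  have hsubdiff : vs.tail.toFinset ⊆ vertsOf ends (S ∪ A) \ vertsOf ends S := by
    intro v hv
    rw [List.mem_toFinset] at hv
    rw [Finset.mem_sdiff]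
    refine ⟨?_, htail v hv⟩
    rw [vertsOf_union]
    exact Finset.mem_union_right _ (hvsA v (List.mem_of_mem_tail hv))
  have htailnd : vs.tail.Nodup := hnd.tail
  have htaillen : vs.tail.length = es.length := by
    cases vs with
    | nil => cases hchain
    | cons a l => simp at hlen ⊢; omega
  have hcard1 : es.length ≤ (vertsOf ends (S ∪ A) \ vertsOf ends S).card := by
    calc es.length = vs.tail.toFinset.card := by
          rw [List.toFinset_card_of_nodup htailnd, htaillen]
      _ ≤ _ := Finset.card_le_card hsubdiff
  have hsubSA : vertsOf ends S ⊆ vertsOf ends (S ∪ A) :=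
    vertsOf_mono ends Finset.subset_union_left
  have hcard2 : (vertsOf ends (S ∪ A) \ vertsOf ends S).card
      = (vertsOf ends (S ∪ A)).card - (vertsOf ends S).card := Finset.card_sdiff_of_subset hsubSA
  have hcardle := Finset.card_le_card hsubSA
  refine ⟨A, hdisj, by push_cast; omega, ?_, ?_, ?_⟩
  · -- degree of z
    have hdz : degIn ends (S ∪ A) z = degIn ends S z + degIn ends A z := by
      rw [Finset.union_comm]
      rw [degIn_union ends hdisj]
      omega
    have hdA : 1 ≤ degIn ends A z := by
      rcases eq_or_ne es [] with rfl | hne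
      · obtain ⟨hzc, hvs⟩ := hchain.nil_inv ends
        refine one_le_degIn_of_mem ends (mem_vertsOf_of_mem ends (Finset.mem_insert_self f _) ?_)
        rw [hf, ← hzc]; simp
      · refine one_le_degIn_of_mem ends (vertsOf_mono ends (Finset.subset_insert _ _) ?_)
        exact (hchain.mem_vertsOf_iff ends hne z).mpr hheadz
    omega
  · -- degrees of new vertices
    intro v hvA hvS
    have hdegS : degIn ends S v = 0 := by
      by_contra hc
      exact hvS (mem_vertsOf_of_one_le_degIn ends (by omega))
    have hsum : degIn ends (S ∪ A) v = degIn ends S v + degIn ends A v := by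
      rw [Finset.union_comm, degIn_union ends hdisj]; omega
    have hvz : v ≠ z := fun hc => hvS (hc ▸ hzS)
    have hvvs : v ∈ vs := by
      rcases hmemA v hvA with h | rfl
      · exact h
      · rcases hu with ⟨h1, _⟩ | h2
        · exact absurd h1 hvS
        · exact h2
    have hne : es ≠ [] := by
      rintro rfl
      obtain ⟨hzc, hvs⟩ := hchain.nil_inv ends
      rw [hvs] at hvvs
      exact hvz (List.mem_singleton.mp hvvs)
    have hdeg := hchain.deg ends hnd v hvvs
    rw [if_neg hvz] at hdeg
    have hdAsplit : degIn ends A v = degIn ends ({f} : Finset E) v + degIn ends es.toFinset v := by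
      rw [hAsplit, degIn_union ends hdisjfe]
    by_cases hvc : v = c
    · have hdf : 1 ≤ degIn ends ({f} : Finset E) v := by
        refine one_le_degIn_of_mem ends (mem_vertsOf_of_mem ends (Finset.mem_singleton_self f) ?_)
        rw [hf, hvc]; simp
      rw [if_pos hvc] at hdeg
      omega
    · rw [if_neg hvc] at hdeg
      omega
  · -- reachability
    intro v hvA
    have hstepmem : f ∈ S ∪ A := Finset.mem_union_right _ (Finset.mem_insert_self f _)
    have hreachvs : ∀ w ∈ vs, Relation.ReflTransGen (adjIn ends (S ∪ A)) w z := by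
      intro w hw
      refine reach_symm ends (reach_mono ends ?_ (hchain.reach ends w hw))
      intro e he
      exact Finset.mem_union_right _ (Finset.mem_insert_of_mem he)
    rcases hmemA v hvA with h | rfl
    · exact hreachvs v h
    · have hcz : Relation.ReflTransGen (adjIn ends (S ∪ A)) c z :=
        hreachvs c (hchain.last_mem ends)
      exact Relation.ReflTransGen.head ⟨f, hstepmem, by rw [hf, Sym2.eq_swap]⟩ hcz

/-- A path from `x` to the vertex set of `F`, meeting it only at the final edge. -/
lemma pathto (hconn : connIn ends (Finset.univ : Finset E)) (F : Finset E)
    (hFne : (vertsOf ends F).Nonempty) (x : V)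
    (hxu : x ∈ vertsOf ends (Finset.univ : Finset E)) (hxF : x ∉ vertsOf ends F) :
    ∃ P : Finset E, Disjoint P F ∧
      (P.card : ℤ) ≤ ((vertsOf ends (F ∪ P)).card : ℤ) - (vertsOf ends F).card ∧
      x ∈ vertsOf ends P ∧
      degIn ends (F ∪ P) x = 1 ∧
      (∀ v ∈ vertsOf ends P, v ∉ vertsOf ends F → v ≠ x → 2 ≤ degIn ends (F ∪ P) v) ∧
      (∀ v ∈ vertsOf ends P, Relation.ReflTransGen (adjIn ends (F ∪ P)) v x) ∧
      (∃ w ∈ vertsOf ends F, Relation.ReflTransGen (adjIn ends (F ∪ P)) x w) := by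
  classical
  obtain ⟨b, hb⟩ := hFne
  have hbu : b ∈ vertsOf ends (Finset.univ : Finset E) :=
    vertsOf_mono ends (Finset.subset_univ F) hb
  obtain ⟨vs0, es0, hchain0, hnd0, _⟩ := exists_path ends (hconn x hxu b hbu)
  obtain ⟨c, vs, es, f, u, hchain, hout, hf, hu, hsub1, hsub2⟩ :=
    hchain0.truncate ends (W := vertsOf ends F) hxF hb
  have hnd : vs.Nodup := hsub1.nodup hnd0
  have hesfnd : (es ++ [f]).Nodup := hsub2.nodup (hchain0.edges_nodup ends hnd0)
  have hesnd : es.Nodup := (List.nodup_append.mp hesfnd).1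
  have hfes : f ∉ es := by
    intro hmem
    rw [List.nodup_append] at hesfnd
    exact hesfnd.2.2 f hmem f (List.mem_singleton_self f) rfl
  set P : Finset E := insert f es.toFinset with hP
  have hfnotin : f ∉ es.toFinset := fun h => hfes (List.mem_toFinset.mp h)
  have hPcard : P.card = es.length + 1 := by
    rw [hP, Finset.card_insert_of_notMem hfnotin, List.toFinset_card_of_nodup hesnd]
  have hlen : vs.length = es.length + 1 := hchain.length_eq ends
  have hcvs : c ∈ vs := hchain.last_mem ends
  have hcF : c ∉ vertsOf ends F := hout c hcvs
  have huc : u ≠ c := fun hc => hcF (hc ▸ hu)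
  have hfnonloop : ends f ≠ s(c, c) := by
    rw [hf]; intro hc; rw [Sym2.eq_iff] at hc; tauto
  -- edges of P avoid F
  have hedge_notF : ∀ e ∈ P, e ∉ F := by
    intro e he
    rcases Finset.mem_insert.mp he with rfl | he2
    · intro heF
      exact hcF (mem_vertsOf_of_mem ends heF (by rw [hf]; simp))
    · intro heF
      obtain ⟨p, q, hpq⟩ := sym2_exists (ends e)
      have hp : p ∈ vs := hchain.edge_ends_mem ends (List.mem_toFinset.mp he2)
        (by rw [hpq]; simp)
      exact hout p hp (mem_vertsOf_of_mem ends heF (by rw [hpq]; simp))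
  have hdisj : Disjoint P F := by
    rw [Finset.disjoint_left]; exact hedge_notF
  -- every chain vertex is a vertex of P
  have hvsP : ∀ v ∈ vs, v ∈ vertsOf ends P := by
    intro v hv
    rcases eq_or_ne es [] with rfl | hne
    · obtain ⟨hxc, hvs⟩ := hchain.nil_inv ends
      rw [hvs] at hv
      rcases List.mem_singleton.mp hv with rfl
      refine mem_vertsOf_of_mem ends (Finset.mem_insert_self f _) ?_
      rw [hf, ← hxc]; simp
    · exact vertsOf_mono ends (Finset.subset_insert _ _)
        ((hchain.mem_vertsOf_iff ends hne v).mpr hv)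
  have hmemP : ∀ v ∈ vertsOf ends P, v ∈ vs ∨ v = u := by
    intro v hv
    rw [mem_vertsOf] at hv
    obtain ⟨e, he, hv⟩ := hv
    rcases Finset.mem_insert.mp he with rfl | he2
    · rw [hf] at hv
      rcases Sym2.mem_iff.mp hv with rfl | rfl
      · exact Or.inl hcvs
      · exact Or.inr rfl
    · exact Or.inl (hchain.edge_ends_mem ends (List.mem_toFinset.mp he2) hv)
  -- cardinality
  have hsubdiff : vs.toFinset ⊆ vertsOf ends (F ∪ P) \ vertsOf ends F := by
    intro v hv
    rw [List.mem_toFinset] at hv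
    rw [Finset.mem_sdiff, vertsOf_union]
    exact ⟨Finset.mem_union_right _ (hvsP v hv), hout v hv⟩
  have hsubFP : vertsOf ends F ⊆ vertsOf ends (F ∪ P) :=
    vertsOf_mono ends Finset.subset_union_left
  have hcard1 : es.length + 1 ≤ (vertsOf ends (F ∪ P) \ vertsOf ends F).card := by
    calc es.length + 1 = vs.toFinset.card := by
          rw [List.toFinset_card_of_nodup hnd, hlen]
      _ ≤ _ := Finset.card_le_card hsubdiff
  have hcard2 : (vertsOf ends (F ∪ P) \ vertsOf ends F).card
      = (vertsOf ends (F ∪ P)).card - (vertsOf ends F).card := Finset.card_sdiff_of_subset hsubFP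
  have hcardle := Finset.card_le_card hsubFP
  have hxvs : x ∈ vs := hchain.head_mem ends
  have hdegF0 : ∀ v ∈ vs, degIn ends F v = 0 := by
    intro v hv
    by_contra hc
    exact hout v hv (mem_vertsOf_of_one_le_degIn ends (by omega))
  have hdisjfe : Disjoint ({f} : Finset E) es.toFinset := by simpa using hfnotin
  have hPsplit : P = {f} ∪ es.toFinset := by rw [hP, Finset.insert_eq]
  have hdegsplit : ∀ v, degIn ends (F ∪ P) v =
      degIn ends F v + degIn ends ({f} : Finset E) v + degIn ends es.toFinset v := by
    intro v
    rw [Finset.union_comm, degIn_union ends hdisj, hPsplit, degIn_union ends hdisjfe]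
    omega
  refine ⟨P, hdisj, by push_cast; omega, hvsP x hxvs, ?_, ?_, ?_, ?_⟩
  · -- degree of x is 1
    rcases eq_or_ne es [] with rfl | hne
    · obtain ⟨hxc, hvs⟩ := hchain.nil_inv ends
      rw [hdegsplit x, hdegF0 x hxvs]
      have h1 : degIn ends ({f} : Finset E) x = 1 :=
        degIn_singleton_nonloop ends (by rw [hf, ← hxc]) (by rw [← hxc] at huc; exact Ne.symm huc)
      simp [h1, degIn_eq]
    · have hctail : c ∈ vs.tail := hchain.last_mem_tail ends hne
      have hxc : x ≠ c := by
        cases hchain with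
        | nil => simp at hne
        | cons e he t =>
            intro hxc
            simp only [List.nodup_cons] at hnd
            exact hnd.1 (hxc ▸ hctail)
      have hxu2 : x ≠ u := fun hc => hxF (hc ▸ hu)
      have h1 : degIn ends ({f} : Finset E) x = 0 := by
        refine degIn_singleton_not_mem ends ?_
        rw [hf]; simp [hxc, hxu2]
      have h2 := hchain.deg ends hnd x hxvs
      rw [if_pos rfl, if_neg hxc] at h2
      rw [hdegsplit x, hdegF0 x hxvs, h1, h2]
  · -- degrees of internal vertices
    intro v hvP hvF hvx
    rcases hmemP v hvP with hvvs | rfl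
    · have hne : es ≠ [] := by
        rintro rfl
        obtain ⟨hxc, hvs⟩ := hchain.nil_inv ends
        rw [hvs] at hvvs
        exact hvx (List.mem_singleton.mp hvvs)
      have hdeg := hchain.deg ends hnd v hvvs
      rw [if_neg hvx] at hdeg
      rw [hdegsplit v]
      by_cases hvc : v = c
      · have hdf : 1 ≤ degIn ends ({f} : Finset E) v := by
          refine one_le_degIn_of_mem ends
            (mem_vertsOf_of_mem ends (Finset.mem_singleton_self f) ?_)
          rw [hf, hvc]; simp
        rw [if_pos hvc] at hdeg
        omega
      · rw [if_neg hvc] at hdeg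
        omega
    · exact absurd hu hvF
  · -- reachability to x
    have hreachvs : ∀ w ∈ vs, Relation.ReflTransGen (adjIn ends (F ∪ P)) w x := by
      intro w hw
      refine reach_symm ends (reach_mono ends ?_ (hchain.reach ends w hw))
      intro e he
      exact Finset.mem_union_right _ (Finset.mem_insert_of_mem he)
    intro v hvP
    rcases hmemP v hvP with h | rfl
    · exact hreachvs v h
    · refine Relation.ReflTransGen.head
        ⟨f, Finset.mem_union_right _ (Finset.mem_insert_self f _), by rw [hf, Sym2.eq_swap]⟩
        (hreachvs c hcvs)
  · -- x reaches a vertex of F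
    refine ⟨u, hu, ?_⟩
    refine Relation.ReflTransGen.tail (reach_mono ends ?_ (hchain.reach ends c hcvs))
      ⟨f, Finset.mem_union_right _ (Finset.mem_insert_self f _), hf⟩
    intro e he
    exact Finset.mem_union_right _ (Finset.mem_insert_of_mem he)

end Part4


section Part5
variable [Fintype V] [Fintype E] [DecidableEq V] [DecidableEq E] (ends : E → Sym2 V)
set_option linter.unusedSectionVars false

lemma assemble (S : Finset E) (x : V)
    (hreach : ∀ v ∈ vertsOf ends S, Relation.ReflTransGen (adjIn ends S) v x)
    (hdeg : ∀ v ∈ vertsOf ends S, 2 ≤ degIn ends S v) :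
    connIn ends S ∧ leaflessIn ends S := by
  constructor
  · intro v hv w hw
    exact (hreach v hv).trans (reach_symm ends (hreach w hw))
  · intro v hv
    have := hdeg v hv
    omega

lemma mem_vertsOf_single {a : E} {x y v : V} (hxy : ends a = s(x, y)) :
    v ∈ vertsOf ends ({a} : Finset E) ↔ v = x ∨ v = y := by
  rw [mem_vertsOf]
  constructor
  · rintro ⟨e, he, hv⟩
    rcases Finset.mem_singleton.mp he with rfl
    rw [hxy] at hv
    exact Sym2.mem_iff.mp hv
  · rintro (rfl | rfl) <;> exact ⟨a, Finset.mem_singleton_self a, by rw [hxy]; simp⟩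

/-- Fix a possible leaf `y` which can reach `x`; all other vertices have degree ≥ 2. -/
lemma fix_y (hleafless : leaflessIn ends (Finset.univ : Finset E))
    (S2 : Finset E) (x y : V)
    (hyS2 : y ∈ vertsOf ends S2)
    (hreach2 : ∀ v ∈ vertsOf ends S2, Relation.ReflTransGen (adjIn ends S2) v x)
    (hdeg2 : ∀ v ∈ vertsOf ends S2, v ≠ y → 2 ≤ degIn ends S2 v) :
    ∃ S' : Finset E, S2 ⊆ S' ∧ connIn ends S' ∧ leaflessIn ends S' ∧
      (S'.card : ℤ) - ((vertsOf ends S').card : ℤ) ≤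
        (S2.card : ℤ) - ((vertsOf ends S2).card : ℤ) + 1 := by
  classical
  by_cases hdy : 2 ≤ degIn ends S2 y
  · -- no fix needed
    have hall : ∀ v ∈ vertsOf ends S2, 2 ≤ degIn ends S2 v := by
      intro v hv
      by_cases hvy : v = y
      · exact hvy ▸ hdy
      · exact hdeg2 v hv hvy
    obtain ⟨hc, hl⟩ := assemble ends S2 x hreach2 hall
    exact ⟨S2, Finset.Subset.refl _, hc, hl, by omega⟩
  · -- y is a leaf : attach a tentacle
    have hdy1 : degIn ends S2 y = 1 := by
      have := one_le_degIn_of_mem ends hyS2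
      omega
    obtain ⟨Ay, hdisjy, hcardy, hdegy, hnewy, hreachy⟩ :=
      tent ends hleafless S2 y hdy1
    set S' : Finset E := S2 ∪ Ay with hS'
    have hsub : S2 ⊆ S' := Finset.subset_union_left
    have hyx : Relation.ReflTransGen (adjIn ends S') y x := by
      refine reach_mono ends hsub (hreach2 y hyS2)
    have hvertsS' : vertsOf ends S' = vertsOf ends S2 ∪ vertsOf ends Ay := by
      rw [hS', vertsOf_union]
    have hreach' : ∀ v ∈ vertsOf ends S', Relation.ReflTransGen (adjIn ends S') v x := by
      intro v hv
      rw [hvertsS', Finset.mem_union] at hv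
      rcases hv with hv | hv
      · exact reach_mono ends hsub (hreach2 v hv)
      · exact (hreachy v hv).trans hyx
    have hdeg' : ∀ v ∈ vertsOf ends S', 2 ≤ degIn ends S' v := by
      intro v hv
      rw [hvertsS', Finset.mem_union] at hv
      by_cases hvS2 : v ∈ vertsOf ends S2
      · by_cases hvy : v = y
        · exact hvy ▸ hdegy
        · exact le_trans (hdeg2 v hvS2 hvy) (degIn_mono ends hsub v)
      · rcases hv with hv | hv
        · exact absurd hv hvS2
        · exact hnewy v hv hvS2
    obtain ⟨hc, hl⟩ := assemble ends S' x hreach' hdeg'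
    have hcardS' : S'.card = S2.card + Ay.card := by
      rw [hS', Finset.card_union_of_disjoint hdisjy.symm]
    have hcardverts : (vertsOf ends S2).card ≤ (vertsOf ends S').card :=
      Finset.card_le_card (vertsOf_mono ends hsub)
    refine ⟨S', hsub, hc, hl, ?_⟩
    omega

/-- Add a single edge `a = s(x,y)` to a set `S1` in which `x` is already present,
all vertices other than `x` have degree ≥ 2, and everything reaches `x`. -/
lemma extend_step (hleafless : leaflessIn ends (Finset.univ : Finset E))
    (S1 : Finset E) (a : E) (x y : V) (hxy : ends a = s(x, y)) (haS1 : a ∉ S1)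
    (hxS1 : x ∈ vertsOf ends S1)
    (hreach : ∀ v ∈ vertsOf ends S1, Relation.ReflTransGen (adjIn ends S1) v x)
    (hdeg : ∀ v ∈ vertsOf ends S1, v ≠ x → 2 ≤ degIn ends S1 v) :
    ∃ S' : Finset E, S1 ⊆ S' ∧ a ∈ S' ∧ connIn ends S' ∧ leaflessIn ends S' ∧
      (S'.card : ℤ) - ((vertsOf ends S').card : ℤ) ≤
        (S1.card : ℤ) - ((vertsOf ends S1).card : ℤ) + 1 := by
  classical
  set S2 : Finset E := S1 ∪ {a} with hS2
  have hdisj : Disjoint S1 ({a} : Finset E) := by simpa using haS1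
  have hsub12 : S1 ⊆ S2 := Finset.subset_union_left
  have haS2 : a ∈ S2 := Finset.mem_union_right _ (Finset.mem_singleton_self a)
  have hcard2 : S2.card = S1.card + 1 := by
    rw [hS2, Finset.card_union_of_disjoint hdisj, Finset.card_singleton]
  have hverts2 : vertsOf ends S2 = vertsOf ends S1 ∪ vertsOf ends {a} := by
    rw [hS2, vertsOf_union]
  have hdeg2eq : ∀ v, degIn ends S2 v = degIn ends S1 v + degIn ends {a} v :=
    fun v => by rw [hS2, degIn_union ends hdisj]
  have hdegax : 1 ≤ degIn ends ({a} : Finset E) x :=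
    one_le_degIn_of_mem ends ((mem_vertsOf_single ends hxy).mpr (Or.inl rfl))
  have hdegx1 : 1 ≤ degIn ends S1 x := one_le_degIn_of_mem ends hxS1
  have hx2 : 2 ≤ degIn ends S2 x := by rw [hdeg2eq]; omega
  have hxS2 : x ∈ vertsOf ends S2 := vertsOf_mono ends hsub12 hxS1
  have hstepyx : Relation.ReflTransGen (adjIn ends S2) y x :=
    Relation.ReflTransGen.single ⟨a, haS2, by rw [hxy]; exact Sym2.eq_swap⟩
  have hreach2 : ∀ v ∈ vertsOf ends S2, Relation.ReflTransGen (adjIn ends S2) v x := by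
    intro v hv
    rw [hverts2, Finset.mem_union] at hv
    rcases hv with hv | hv
    · exact reach_mono ends hsub12 (hreach v hv)
    · rcases (mem_vertsOf_single ends hxy).mp hv with rfl | rfl
      · exact Relation.ReflTransGen.refl
      · exact hstepyx
  by_cases hyS1 : y ∈ vertsOf ends S1
  · -- y already present : no leaf at all
    have hall : ∀ v ∈ vertsOf ends S2, 2 ≤ degIn ends S2 v := by
      intro v hv
      by_cases hvx : v = x
      · exact hvx ▸ hx2
      · rw [hverts2, Finset.mem_union] at hv
        by_cases hvS1 : v ∈ vertsOf ends S1
        · have := hdeg v hvS1 hvx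
          have := hdeg2eq v
          omega
        · rcases hv with hv | hv
          · exact absurd hv hvS1
          · rcases (mem_vertsOf_single ends hxy).mp hv with rfl | rfl
            · exact absurd rfl hvx
            · exact absurd hyS1 hvS1
    obtain ⟨hc, hl⟩ := assemble ends S2 x hreach2 hall
    have hcv : (vertsOf ends S1).card ≤ (vertsOf ends S2).card :=
      Finset.card_le_card (vertsOf_mono ends hsub12)
    exact ⟨S2, hsub12, haS2, hc, hl, by omega⟩
  · -- y is new : y is the only possible leaf, fix it
    have hyx : y ≠ x := fun h => hyS1 (h ▸ hxS1)
    have hyS2 : y ∈ vertsOf ends S2 := by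
      rw [hverts2, Finset.mem_union]
      exact Or.inr ((mem_vertsOf_single ends hxy).mpr (Or.inr rfl))
    have hdeg2' : ∀ v ∈ vertsOf ends S2, v ≠ y → 2 ≤ degIn ends S2 v := by
      intro v hv hvy
      by_cases hvx : v = x
      · exact hvx ▸ hx2
      · rw [hverts2, Finset.mem_union] at hv
        rcases hv with hv | hv
        · have := hdeg v hv hvx
          have := hdeg2eq v
          omega
        · rcases (mem_vertsOf_single ends hxy).mp hv with rfl | rfl
          · exact absurd rfl hvx
          · exact absurd rfl hvy
    obtain ⟨S', hsub2, hc, hl, hb⟩ := fix_y ends hleafless S2 x y hyS2 hreach2 hdeg2'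
    have hvertseq : vertsOf ends S2 = insert y (vertsOf ends S1) := by
      rw [hverts2]
      ext v
      rw [Finset.mem_union, Finset.mem_insert, mem_vertsOf_single ends hxy]
      constructor
      · rintro (hv | rfl | rfl)
        · exact Or.inr hv
        · exact Or.inr hxS1
        · exact Or.inl rfl
      · rintro (rfl | hv)
        · exact Or.inr (Or.inr rfl)
        · exact Or.inl hv
    have hvcard : (vertsOf ends S2).card = (vertsOf ends S1).card + 1 := by
      rw [hvertseq, Finset.card_insert_of_notMem hyS1]
    refine ⟨S', hsub12.trans hsub2, hsub2 haS2, hc, hl, by omega⟩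

end Part5


section Part6
variable [Fintype V] [Fintype E] [DecidableEq V] [DecidableEq E] (ends : E → Sym2 V)
set_option linter.unusedSectionVars false

theorem main_aux (hconn : connIn ends (Finset.univ : Finset E))
    (hleafless : leaflessIn ends (Finset.univ : Finset E)) (M : Finset E) :
    ∃ F : Finset E, M ⊆ F ∧ connIn ends F ∧ leaflessIn ends F ∧
      (F.card : ℤ) - ((vertsOf ends F).card : ℤ) ≤ (M.card : ℤ) := by
  classical
  induction M using Finset.induction_on with
  | empty =>
      refine ⟨∅, Finset.Subset.refl _, ?_, ?_, by simp⟩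
      · intro v hv; rw [vertsOf_empty] at hv; exact absurd hv (Finset.notMem_empty v)
      · intro v hv; rw [vertsOf_empty] at hv; exact absurd hv (Finset.notMem_empty v)
  | @insert a M ha ih =>
      obtain ⟨F, hMF, hFconn, hFleafless, hFcard⟩ := ih
      have hcardM : ((insert a M).card : ℤ) = (M.card : ℤ) + 1 := by
        rw [Finset.card_insert_of_notMem ha]; push_cast; ring
      by_cases haF : a ∈ F
      · exact ⟨F, Finset.insert_subset haF hMF, hFconn, hFleafless, by omega⟩
      obtain ⟨x, y, hxy⟩ := sym2_exists (ends a)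
      have hxa : x ∈ ends a := by rw [hxy]; simp
      have hxuniv : x ∈ vertsOf ends (Finset.univ : Finset E) :=
        mem_vertsOf_of_mem ends (Finset.mem_univ a) hxa
      by_cases hFne : (vertsOf ends F).Nonempty
      · -- =============== general case : F has vertices ===============
        by_cases hxF : x ∈ vertsOf ends F
        · -- x already a vertex of F : extend directly
          obtain ⟨S', hsub, haS', hc, hl, hb⟩ :=
            extend_step ends hleafless F a x y hxy haF hxF
              (fun v hv => hFconn v hv x hxF)
              (fun v hv _ => two_le_degIn_of_leafless ends hFleafless hv)
          exact ⟨S', Finset.insert_subset haS' (hMF.trans hsub), hc, hl, by omega⟩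
        · -- x not in F : connect x to F by a path P first
          obtain ⟨P, hdisjP, hcardP, hxP, hdegPx, hdegP, hreachP, w, hwF, hxw⟩ :=
            pathto ends hconn F hFne x hxuniv hxF
          set S1 : Finset E := F ∪ P with hS1
          have hsubF : F ⊆ S1 := Finset.subset_union_left
          have hsubP : P ⊆ S1 := Finset.subset_union_right
          have hvertsS1 : vertsOf ends S1 = vertsOf ends F ∪ vertsOf ends P := by
            rw [hS1, vertsOf_union]
          have hcardS1 : S1.card = F.card + P.card := by
            rw [hS1, Finset.card_union_of_disjoint hdisjP.symm]
          have hxS1 : x ∈ vertsOf ends S1 := by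
            rw [hvertsS1]; exact Finset.mem_union_right _ hxP
          have hreachS1 : ∀ v ∈ vertsOf ends S1,
              Relation.ReflTransGen (adjIn ends S1) v x := by
            intro v hv
            rw [hvertsS1, Finset.mem_union] at hv
            by_cases hvF : v ∈ vertsOf ends F
            · have h1 : Relation.ReflTransGen (adjIn ends S1) v w :=
                reach_mono ends hsubF (hFconn v hvF w hwF)
              exact h1.trans (reach_symm ends hxw)
            · rcases hv with hv | hv
              · exact absurd hv hvF
              · exact hreachP v hv
          have hdegS1 : ∀ v ∈ vertsOf ends S1, v ≠ x → 2 ≤ degIn ends S1 v := by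
            intro v hv hvx
            rw [hvertsS1, Finset.mem_union] at hv
            by_cases hvF : v ∈ vertsOf ends F
            · exact le_trans (two_le_degIn_of_leafless ends hFleafless hvF)
                (degIn_mono ends hsubF v)
            · rcases hv with hv | hv
              · exact absurd hv hvF
              · exact hdegP v hv hvF hvx
          have hbS1 : (S1.card : ℤ) - ((vertsOf ends S1).card : ℤ) ≤
              (F.card : ℤ) - ((vertsOf ends F).card : ℤ) := by omega
          by_cases haP : a ∈ P
          · -- the new edge is already on the path : just fix the leaf x
            obtain ⟨S', hsub2, hc, hl, hb⟩ :=
              fix_y ends hleafless S1 x x hxS1 hreachS1 hdegS1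
            refine ⟨S', Finset.insert_subset (hsub2 (hsubP haP))
              ((hMF.trans hsubF).trans hsub2), hc, hl, by omega⟩
          · -- add the new edge and fix the possible leaf y
            have haS1 : a ∉ S1 := by
              rw [hS1, Finset.mem_union]
              rintro (h | h)
              · exact haF h
              · exact haP h
            obtain ⟨S', hsub2, haS', hc, hl, hb⟩ :=
              extend_step ends hleafless S1 a x y hxy haS1 hxS1 hreachS1 hdegS1
            exact ⟨S', Finset.insert_subset haS' ((hMF.trans hsubF).trans hsub2),
              hc, hl, by omega⟩
      · -- =============== base-ish case : F is empty ===============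
        have hF0 : F = ∅ := by
          by_contra h
          exact hFne (vertsOf_nonempty ends (Finset.nonempty_iff_ne_empty.mpr h))
        have hM0 : ∀ e ∈ M, False := by
          intro e he
          have := hMF he
          rw [hF0] at this
          exact absurd this (Finset.notMem_empty e)
        by_cases hxy2 : x = y
        · -- a is a loop : {a} works
          subst hxy2
          refine ⟨{a}, ?_, ?_, ?_, ?_⟩
          · exact Finset.insert_subset (Finset.mem_singleton_self a)
              (fun e he => absurd (hM0 e he) not_false)
          · intro v hv w hw
            rcases (mem_vertsOf_single ends hxy).mp hv with rfl | rfl <;>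
              rcases (mem_vertsOf_single ends hxy).mp hw with rfl | rfl <;>
              exact Relation.ReflTransGen.refl
          · intro v hv
            rcases (mem_vertsOf_single ends hxy).mp hv with rfl | rfl <;>
              · rw [degIn_singleton_loop ends hxy]; omega
          · have hva : vertsOf ends ({a} : Finset E) = {x} := by
              ext v
              rw [mem_vertsOf_single ends hxy, Finset.mem_singleton]
              tauto
            rw [hva]
            simp
        · -- a is a non-loop : build a dumbbell-like structure
          have hd1 : degIn ends ({a} : Finset E) x = 1 :=
            degIn_singleton_nonloop ends hxy hxy2
          obtain ⟨Ax, hdisjx, hcardx, hdegx3, hnewx, hreachx⟩ :=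
            tent ends hleafless {a} x hd1
          set S3 : Finset E := {a} ∪ Ax with hS3
          have haS3 : a ∈ S3 := Finset.mem_union_left _ (Finset.mem_singleton_self a)
          have hvertsS3 : vertsOf ends S3 = vertsOf ends {a} ∪ vertsOf ends Ax := by
            rw [hS3, vertsOf_union]
          have hsuba : ({a} : Finset E) ⊆ S3 := Finset.subset_union_left
          have hyS3 : y ∈ vertsOf ends S3 :=
            vertsOf_mono ends hsuba ((mem_vertsOf_single ends hxy).mpr (Or.inr rfl))
          have hreach3 : ∀ v ∈ vertsOf ends S3,
              Relation.ReflTransGen (adjIn ends S3) v x := by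
            intro v hv
            rw [hvertsS3, Finset.mem_union] at hv
            rcases hv with hv | hv
            · rcases (mem_vertsOf_single ends hxy).mp hv with rfl | rfl
              · exact Relation.ReflTransGen.refl
              · exact Relation.ReflTransGen.single
                  ⟨a, haS3, by rw [hxy]; exact Sym2.eq_swap⟩
            · exact hreachx v hv
          have hdeg3 : ∀ v ∈ vertsOf ends S3, v ≠ y → 2 ≤ degIn ends S3 v := by
            intro v hv hvy
            by_cases hvx : v = x
            · exact hvx ▸ hdegx3
            · rw [hvertsS3, Finset.mem_union] at hv
              rcases hv with hv | hv
              · rcases (mem_vertsOf_single ends hxy).mp hv with rfl | rfl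
                · exact absurd rfl hvx
                · exact absurd rfl hvy
              · by_cases hva : v ∈ vertsOf ends ({a} : Finset E)
                · rcases (mem_vertsOf_single ends hxy).mp hva with rfl | rfl
                  · exact absurd rfl hvx
                  · exact absurd rfl hvy
                · exact hnewx v hv hva
          obtain ⟨S', hsub2, hc, hl, hb⟩ :=
            fix_y ends hleafless S3 x y hyS3 hreach3 hdeg3
          have hvacard : (vertsOf ends ({a} : Finset E)).card = 2 := by
            have hva : vertsOf ends ({a} : Finset E) = {x, y} := by
              ext v
              rw [mem_vertsOf_single ends hxy, Finset.mem_insert, Finset.mem_singleton]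
            rw [hva, Finset.card_insert_of_notMem (by simpa using hxy2),
              Finset.card_singleton]
          have hcardS3 : S3.card = 1 + Ax.card := by
            rw [hS3, Finset.card_union_of_disjoint hdisjx.symm, Finset.card_singleton]
          refine ⟨S', Finset.insert_subset (hsub2 haS3)
            (fun e he => absurd (hM0 e he) not_false), hc, hl, ?_⟩
          rw [hvacard] at hcardx
          omega

end Part6


/-- Every leafless connected multigraph with a set `M` of marked
edges has a leafless connected subgraph of cyclomatic number at most `|M| + 1`
containing all marked edges. -/
theorem leafless_connected_subgraph_containing_marked_edges
    [Fintype V] [Fintype E] (ends : E → Sym2 V)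
    (hconn : connIn ends (Finset.univ : Finset E))
    (hleafless : leaflessIn ends (Finset.univ : Finset E))
    (M : Finset E) :
    ∃ F : Finset E, M ⊆ F ∧ connIn ends F ∧ leaflessIn ends F ∧
      cyclomatic ends F ≤ (M.card : ℤ) + 1 := by
  classical
  obtain ⟨F, h1, h2, h3, h4⟩ := main_aux ends hconn hleafless M
  refine ⟨F, h1, h2, h3, ?_⟩
  unfold cyclomatic
  omega
end

section
/- Let H be a hash family in which for every set T of at most 2 keys the values are uniform and independent (2-wise independence), combined as h_i(x) = (f_i(x) + Σ_{j=1}^c z^{(i)}[j, g_j(x)]) mod m with independently chosen 2-wise independent f_i, 2-universal g_j, and fully random tables z^{(i)}. Then for every set T ⊆ U, conditioned on the event that some g_j has at most one collision on T (the event good_T), the vector of hash values (h_1(x),...,h_d(x))_{x∈T} is uniformly distributed on ([m]^d)^T. -/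
open Finset

-- Probability of the event `P` on a finite sample space weighted by `w`.
open Classical in
noncomputable def Pr {Ω : Type*} [Fintype Ω] (w : Ω → ℝ) (P : Ω → Prop) : ℝ :=
  ∑ ω ∈ Finset.univ.filter P, w ω

/-- Sample space of the hash class `Z`: the functions `f_1,…,f_d`, the functions
`g_1,…,g_c`, and the random tables `z^{(1)},…,z^{(d)}` (one row per `g_j`). -/
abbrev HashΩ (U : Type*) (m ℓ d c : ℕ) :=
  (Fin d → U → Fin m) × (Fin c → U → Fin ℓ) × (Fin d → Fin c → Fin ℓ → Fin m)

/-- Joint distribution: the `f_i` and `g_j` are chosen independently according to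
`wf i` resp. `wg j`, and all table entries are uniform and independent. -/
noncomputable def hashWeight {U : Type*} [Fintype U] {m ℓ d c : ℕ}
    (wf : Fin d → (U → Fin m) → ℝ) (wg : Fin c → (U → Fin ℓ) → ℝ)
    (ω : HashΩ U m ℓ d c) : ℝ :=
  (∏ i, wf i (ω.1 i)) * (∏ j, wg j (ω.2.1 j)) *
    (1 / (Fintype.card (Fin d → Fin c → Fin ℓ → Fin m) : ℝ))

/-- `w` is a distribution on a 2-wise independent class of functions `U → [m]`. -/
def twoWiseIndep {U : Type*} [Fintype U] [DecidableEq U] {m : ℕ} (w : (U → Fin m) → ℝ) : Prop :=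
  (∀ f, 0 ≤ w f) ∧ (∑ f, w f = 1) ∧
    ∀ x y : U, x ≠ y → ∀ a b : Fin m,
      (∑ f ∈ Finset.univ.filter fun f : U → Fin m => f x = a ∧ f y = b, w f)
        = 1 / (m : ℝ) ^ 2

/-- `w` is a distribution on a 2-universal class of functions `U → [ℓ]`. -/
def twoUniversal {U : Type*} [Fintype U] [DecidableEq U] {ℓ : ℕ} (w : (U → Fin ℓ) → ℝ) : Prop :=
  (∀ g, 0 ≤ w g) ∧ (∑ g, w g = 1) ∧
    ∀ x y : U, x ≠ y →
      (∑ g ∈ Finset.univ.filter fun g : U → Fin ℓ => g x = g y, w g) ≤ 2 / (ℓ : ℝ)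

/-- The hash function `h_i(x) = (f_i(x) + ∑_j z^{(i)}[j, g_j(x)]) mod m`
(addition in `Fin m` is addition mod `m`). -/
def hashFun {U : Type*} {m ℓ d c : ℕ} [NeZero m] (ω : HashΩ U m ℓ d c) (i : Fin d)
    (x : U) : Fin m :=
  ω.1 i x + ∑ j : Fin c, ω.2.2 i j (ω.2.1 j x)

/-- The event `good_T`: the deficiency is at most 1, i.e. some `g_j` has at most
one collision on `T` (equivalently `|g_j(T)| ≥ |T| - 1`). -/
def goodT {U : Type*} [Fintype U] [DecidableEq U] {m ℓ d c : ℕ} (T : Finset U)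
    (ω : HashΩ U m ℓ d c) : Prop :=
  ∃ j : Fin c, T.card ≤ (T.image (ω.2.1 j)).card + 1


section Aux
variable {U : Type*} [Fintype U] [DecidableEq U] {m ℓ c : ℕ} [NeZero m]

open Classical in
lemma count_row (g₀ : U → Fin ℓ) (cf : U → Fin m) (T : Finset U) :
    ∑ r : Fin ℓ → Fin m, (if ∀ x ∈ T, r (g₀ x) = cf x then (1:ℝ) else 0)
      = if (∀ x ∈ T, ∀ y ∈ T, g₀ x = g₀ y → cf x = cf y)
        then (m:ℝ) ^ (ℓ - (T.image g₀).card) else 0 := by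
  classical
  by_cases hcp : ∀ x ∈ T, ∀ y ∈ T, g₀ x = g₀ y → cf x = cf y
  · rw [if_pos hcp]
    have hm0 : 0 < m := Nat.pos_of_ne_zero (NeZero.ne m)
    set ψ : Fin ℓ → Fin m := fun v => if h : ∃ x ∈ T, g₀ x = v then cf h.choose else ⟨0, hm0⟩
      with hψdef
    have hψ : ∀ x ∈ T, ψ (g₀ x) = cf x := by
      intro x hx
      have h : ∃ y ∈ T, g₀ y = g₀ x := ⟨x, hx, rfl⟩
      rw [hψdef]
      simp only
      rw [dif_pos h]
      exact hcp _ h.choose_spec.1 x hx h.choose_spec.2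
    have hiff : ∀ r : Fin ℓ → Fin m,
        (∀ x ∈ T, r (g₀ x) = cf x) ↔ (∀ v, v ∈ T.image g₀ → r v = ψ v) := by
      intro r; constructor
      · intro hr v hv
        rw [Finset.mem_image] at hv
        obtain ⟨x, hx, rfl⟩ := hv
        rw [hr x hx, hψ x hx]
      · intro hr x hx
        rw [hr _ (Finset.mem_image_of_mem _ hx), hψ x hx]
    rw [Finset.sum_congr rfl (fun r _ => if_congr (hiff r) rfl rfl), Finset.sum_boole]
    have hfil : Finset.univ.filter (fun r : Fin ℓ → Fin m => ∀ v, v ∈ T.image g₀ → r v = ψ v)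
        = Fintype.piFinset (fun v => if v ∈ T.image g₀ then ({ψ v} : Finset (Fin m))
            else Finset.univ) := by
      ext r
      simp only [Finset.mem_filter, Finset.mem_univ, true_and, Fintype.mem_piFinset]
      constructor
      · intro hr v
        by_cases hv : v ∈ T.image g₀ <;> simp [hv, hr]
      · intro hr v hv
        have := hr v
        rw [if_pos hv] at this
        simpa using this
    rw [hfil, Fintype.card_piFinset]
    have hcards : ∀ v : Fin ℓ,
        (if v ∈ T.image g₀ then ({ψ v} : Finset (Fin m)) else Finset.univ).card
          = if v ∈ T.image g₀ then 1 else m := by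
      intro v; split_ifs <;> simp
    rw [Finset.prod_congr rfl (fun v _ => hcards v), Finset.prod_ite, Finset.prod_const_one,
      Finset.prod_const, one_mul]
    have : Finset.univ.filter (fun v : Fin ℓ => ¬ v ∈ T.image g₀) = (T.image g₀)ᶜ := by
      ext v; simp
    rw [this, Finset.card_compl, Fintype.card_fin]
    push_cast
    ring
  · rw [if_neg hcp]
    push_neg at hcp
    obtain ⟨x, hx, y, hy, hgeq, hcneq⟩ := hcp
    apply Finset.sum_eq_zero
    intro r _
    rw [if_neg]
    intro hr
    exact hcneq (by rw [← hr x hx, ← hr y hy, hgeq])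

open Fin.CommRing in
lemma pair_prob {w : (U → Fin m) → ℝ} (hw : twoWiseIndep w) {x y : U} (hxy : x ≠ y)
    (δ : Fin m) :
    ∑ f : U → Fin m, w f * (if f x - f y = δ then (1:ℝ) else 0) = 1 / (m:ℝ) := by
  classical
  have key : ∀ f : U → Fin m, w f * (if f x - f y = δ then (1:ℝ) else 0)
      = ∑ bb : Fin m, (if f x = δ + bb ∧ f y = bb then w f else 0) := by
    intro f
    rw [Finset.sum_eq_single (f y)
      (fun b _ hb => by rw [if_neg]; rintro ⟨-, h2⟩; exact hb h2.symm)
      (fun h => absurd (Finset.mem_univ _) h)]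
    by_cases h : f x - f y = δ
    · rw [if_pos h, mul_one, if_pos ⟨by rw [← h]; ring, rfl⟩]
    · rw [if_neg h, mul_zero, if_neg]
      rintro ⟨h1, -⟩
      exact h (by rw [h1]; ring)
  rw [Finset.sum_congr rfl (fun f _ => key f), Finset.sum_comm]
  have hbb : ∀ bb : Fin m, (∑ f : U → Fin m, if f x = δ + bb ∧ f y = bb then w f else 0)
      = 1/(m:ℝ)^2 := by
    intro bb
    rw [← Finset.sum_filter]
    exact hw.2.2 x y hxy (δ + bb) bb
  rw [Finset.sum_congr rfl (fun bb _ => hbb bb), Finset.sum_const, Finset.card_univ,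
    Fintype.card_fin, nsmul_eq_mul]
  have hm : (m:ℝ) ≠ 0 := Nat.cast_ne_zero.2 (NeZero.ne m)
  field_simp

end Aux
section Core
variable {U : Type*} [Fintype U] [DecidableEq U] {m ℓ c : ℕ} [NeZero m]

/-- Split a tuple of rows into the row at `j₀` and the remaining rows. -/
def mySplit {ι : Type*} [DecidableEq ι] (j₀ : ι) (A : Type*) :
    (A × ({j : ι // j ≠ j₀} → A)) ≃ (ι → A) where
  toFun p j := if h : j = j₀ then p.1 else p.2 ⟨j, h⟩
  invFun z := (z j₀, fun j => z j.1)
  left_inv p := by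
    obtain ⟨r, q⟩ := p
    simp only [Prod.mk.injEq]
    constructor
    · simp
    · funext j
      rw [dif_neg j.2]
  right_inv z := by
    funext j
    by_cases h : j = j₀
    · subst h; simp
    · simp [h]

/-- Sum of the remaining rows evaluated along `g`. -/
def restSum (g : Fin c → U → Fin ℓ) (j₀ : Fin c)
    (zr : {j : Fin c // j ≠ j₀} → Fin ℓ → Fin m) (x : U) : Fin m :=
  ∑ j' : {j : Fin c // j ≠ j₀}, zr j' (g j'.1 x)

lemma split_apply_sum (g : Fin c → U → Fin ℓ) (j₀ : Fin c) (r : Fin ℓ → Fin m)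
    (zr : {j : Fin c // j ≠ j₀} → Fin ℓ → Fin m) (x : U) :
    (∑ j, (mySplit j₀ (Fin ℓ → Fin m) (r, zr)) j (g j x))
      = r (g j₀ x) + restSum g j₀ zr x := by
  classical
  rw [← Finset.add_sum_erase _ _ (Finset.mem_univ j₀)]
  congr 1
  · simp [mySplit]
  · rw [Finset.sum_subtype (Finset.univ.erase j₀) (p := fun j => j ≠ j₀)
      (fun j => by simp) (fun j => (mySplit j₀ (Fin ℓ → Fin m) (r, zr)) j (g j x))]
    apply Finset.sum_congr rfl
    intro j' _
    simp [mySplit, restSum, j'.2]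

open Fin.CommRing in
lemma core_sum (w : (U → Fin m) → ℝ) (hw : twoWiseIndep w) (T : Finset U)
    (g : Fin c → U → Fin ℓ) (j₀ : Fin c)
    (hgood : T.card ≤ (T.image (g j₀)).card + 1) (b : U → Fin m) :
    ∑ f : U → Fin m, ∑ z : Fin c → Fin ℓ → Fin m,
      w f * (if ∀ x ∈ T, f x + ∑ j, z j (g j x) = b x then (1:ℝ) else 0)
      = (m:ℝ) ^ (c*ℓ) * (1/(m:ℝ)) ^ T.card := by
  classical
  have hm : (m:ℝ) ≠ 0 := Nat.cast_ne_zero.2 (NeZero.ne m)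
  have hc1 : 1 ≤ c := j₀.pos
  set k := (T.image (g j₀)).card with hk
  have hkle : k ≤ T.card := Finset.card_image_le
  have hkl : k ≤ ℓ := le_trans (Finset.card_le_univ _) (by simp)
  have hN : (Fintype.card ({j : Fin c // j ≠ j₀} → Fin ℓ → Fin m)) = (m^ℓ)^(c-1) := by
    rw [Fintype.card_fun, Fintype.card_fun, Fintype.card_fin, Fintype.card_fin]
    congr 1
    rw [Fintype.card_subtype_compl (p := fun j => j = j₀), Fintype.card_subtype_eq,
      Fintype.card_fin]
  -- Step 1: split each z-sum
  have step1 : ∀ f : U → Fin m,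
      (∑ z : Fin c → Fin ℓ → Fin m,
        (if ∀ x ∈ T, f x + ∑ j, z j (g j x) = b x then (1:ℝ) else 0))
      = ∑ zr : {j : Fin c // j ≠ j₀} → Fin ℓ → Fin m,
          (if (∀ x ∈ T, ∀ y ∈ T, g j₀ x = g j₀ y →
              b x - f x - restSum g j₀ zr x = b y - f y - restSum g j₀ zr y)
           then (m:ℝ)^(ℓ-k) else 0) := by
    intro f
    rw [← Equiv.sum_comp (mySplit j₀ (Fin ℓ → Fin m))
      (fun z => if ∀ x ∈ T, f x + ∑ j, z j (g j x) = b x then (1:ℝ) else 0),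
      Fintype.sum_prod_type, Finset.sum_comm]
    apply Finset.sum_congr rfl
    intro zr _
    have hcond : ∀ r : Fin ℓ → Fin m,
        ((∀ x ∈ T, f x + ∑ j, (mySplit j₀ (Fin ℓ → Fin m) (r, zr)) j (g j x) = b x) ↔
         (∀ x ∈ T, r (g j₀ x) = b x - f x - restSum g j₀ zr x)) := by
      intro r
      constructor
      · intro h x hx
        have h' := h x hx
        rw [split_apply_sum] at h'
        linear_combination h'
      · intro h x hx
        rw [split_apply_sum]
        linear_combination h x hx
    rw [Finset.sum_congr rfl (fun r _ => if_congr (hcond r) rfl rfl)]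
    exact count_row (g j₀) _ T
  rw [Finset.sum_congr rfl (fun f _ => by rw [← Finset.mul_sum, step1 f])]
  rcases (by omega : k = T.card ∨ k + 1 = T.card) with hcase | hcase
  · -- injective case
    have hinj : Set.InjOn (g j₀) T := Finset.card_image_iff.1 (by rw [← hk, hcase])
    have hcompat : ∀ (f : U → Fin m) (zr : {j : Fin c // j ≠ j₀} → Fin ℓ → Fin m),
        (∀ x ∈ T, ∀ y ∈ T, g j₀ x = g j₀ y →
          b x - f x - restSum g j₀ zr x = b y - f y - restSum g j₀ zr y) := by
      intro f zr x hx y hy hgeq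
      rw [hinj (Finset.mem_coe.2 hx) (Finset.mem_coe.2 hy) hgeq]
    have : ∀ f : U → Fin m,
        w f * (∑ zr : {j : Fin c // j ≠ j₀} → Fin ℓ → Fin m,
          (if (∀ x ∈ T, ∀ y ∈ T, g j₀ x = g j₀ y →
              b x - f x - restSum g j₀ zr x = b y - f y - restSum g j₀ zr y)
           then (m:ℝ)^(ℓ-k) else 0))
        = w f * (((m:ℝ)^ℓ)^(c-1) * (m:ℝ)^(ℓ-k)) := by
      intro f
      congr 1
      rw [Finset.sum_congr rfl (fun zr _ => if_pos (hcompat f zr)), Finset.sum_const,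
        Finset.card_univ, hN, nsmul_eq_mul]
      push_cast
      ring
    rw [Finset.sum_congr rfl (fun f _ => this f), ← Finset.sum_mul, hw.2.1, one_mul, ← hcase]
    rw [one_div, inv_pow, eq_mul_inv_iff_mul_eq₀ (pow_ne_zero _ hm), ← pow_mul, ← pow_add,
      ← pow_add]
    congr 1
    rw [add_assoc, Nat.sub_add_cancel hkl]
    obtain ⟨c', rfl⟩ : ∃ c', c = c' + 1 := ⟨c - 1, by omega⟩
    simp only [Nat.add_sub_cancel]
    ring
  · -- one-collision case
    have hninj : ¬ Set.InjOn (g j₀) T := by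
      intro hI
      have := Finset.card_image_iff.2 hI
      omega
    rw [Set.InjOn] at hninj
    push_neg at hninj
    obtain ⟨x₀, hx₀, y₀, hy₀, hgxy, hne⟩ := hninj
    rw [Finset.mem_coe] at hx₀ hy₀
    have himg : (T.erase y₀).image (g j₀) = T.image (g j₀) := by
      apply Finset.Subset.antisymm
      · exact Finset.image_subset_image (Finset.erase_subset _ _)
      · intro v hv
        rw [Finset.mem_image] at hv ⊢
        obtain ⟨x, hx, rfl⟩ := hv
        by_cases hxy : x = y₀
        · exact ⟨x₀, Finset.mem_erase.2 ⟨hne, hx₀⟩, by rw [hgxy, hxy]⟩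
        · exact ⟨x, Finset.mem_erase.2 ⟨hxy, hx⟩, rfl⟩
    have hinj2 : Set.InjOn (g j₀) (T.erase y₀) := by
      apply Finset.card_image_iff.1
      rw [himg, ← hk, Finset.card_erase_of_mem hy₀]
      omega
    have huniq : ∀ x ∈ T, ∀ y ∈ T, g j₀ x = g j₀ y → x ≠ y →
        ((x = x₀ ∧ y = y₀) ∨ (x = y₀ ∧ y = x₀)) := by
      intro x hx y hy hgeq hxy
      by_cases hxy₀ : x = y₀
      · right
        refine ⟨hxy₀, hinj2 ?_ ?_ ?_⟩
        · exact Finset.mem_coe.2 (Finset.mem_erase.2 ⟨fun h => hxy (by rw [h, hxy₀]), hy⟩)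
        · exact Finset.mem_coe.2 (Finset.mem_erase.2 ⟨hne, hx₀⟩)
        · rw [← hgeq, hxy₀, ← hgxy]
      · by_cases hyy₀ : y = y₀
        · left
          refine ⟨hinj2 ?_ ?_ ?_, hyy₀⟩
          · exact Finset.mem_coe.2 (Finset.mem_erase.2 ⟨hxy₀, hx⟩)
          · exact Finset.mem_coe.2 (Finset.mem_erase.2 ⟨hne, hx₀⟩)
          · rw [hgeq, hyy₀, ← hgxy]
        · exfalso
          exact hxy (hinj2 (Finset.mem_coe.2 (Finset.mem_erase.2 ⟨hxy₀, hx⟩))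
            (Finset.mem_coe.2 (Finset.mem_erase.2 ⟨hyy₀, hy⟩)) hgeq)
    have hcompatiff : ∀ (f : U → Fin m) (zr : {j : Fin c // j ≠ j₀} → Fin ℓ → Fin m),
        (∀ x ∈ T, ∀ y ∈ T, g j₀ x = g j₀ y →
          b x - f x - restSum g j₀ zr x = b y - f y - restSum g j₀ zr y)
        ↔ (f x₀ - f y₀ = (b x₀ - restSum g j₀ zr x₀) - (b y₀ - restSum g j₀ zr y₀)) := by
      intro f zr
      constructor
      · intro hcp
        have := hcp x₀ hx₀ y₀ hy₀ hgxy
        linear_combination -this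
      · intro hdiff x hx y hy hgeq
        by_cases hxy : x = y
        · rw [hxy]
        · rcases huniq x hx y hy hgeq hxy with ⟨rfl, rfl⟩ | ⟨rfl, rfl⟩
          · linear_combination -hdiff
          · linear_combination hdiff
    have hstep : ∀ f : U → Fin m,
        w f * (∑ zr : {j : Fin c // j ≠ j₀} → Fin ℓ → Fin m,
          (if (∀ x ∈ T, ∀ y ∈ T, g j₀ x = g j₀ y →
              b x - f x - restSum g j₀ zr x = b y - f y - restSum g j₀ zr y)
           then (m:ℝ)^(ℓ-k) else 0))
        = ∑ zr : {j : Fin c // j ≠ j₀} → Fin ℓ → Fin m,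
            (m:ℝ)^(ℓ-k) * (w f * (if f x₀ - f y₀ =
              (b x₀ - restSum g j₀ zr x₀) - (b y₀ - restSum g j₀ zr y₀) then (1:ℝ) else 0)) := by
      intro f
      rw [Finset.mul_sum]
      apply Finset.sum_congr rfl
      intro zr _
      rw [if_congr (hcompatiff f zr) rfl rfl]
      split_ifs <;> ring
    rw [Finset.sum_congr rfl (fun f _ => hstep f), Finset.sum_comm]
    have hzr : ∀ zr : {j : Fin c // j ≠ j₀} → Fin ℓ → Fin m,
        (∑ f : U → Fin m, (m:ℝ)^(ℓ-k) * (w f * (if f x₀ - f y₀ =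
            (b x₀ - restSum g j₀ zr x₀) - (b y₀ - restSum g j₀ zr y₀) then (1:ℝ) else 0)))
        = (m:ℝ)^(ℓ-k) * (1/(m:ℝ)) := by
      intro zr
      rw [← Finset.mul_sum, pair_prob hw hne _]
    rw [Finset.sum_congr rfl (fun zr _ => hzr zr), Finset.sum_const, Finset.card_univ, hN,
      nsmul_eq_mul, ← hcase]
    push_cast
    rw [one_div, inv_pow, eq_mul_inv_iff_mul_eq₀ (pow_ne_zero _ hm), pow_succ]
    have hfs : ((m:ℝ)^ℓ)^(c-1) * ((m:ℝ)^(ℓ-k) * (m:ℝ)⁻¹) * ((m:ℝ)^k * (m:ℝ))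
        = ((m:ℝ)^ℓ)^(c-1) * (m:ℝ)^(ℓ-k) * (m:ℝ)^k := by
      field_simp
    rw [hfs, ← pow_mul, ← pow_add, ← pow_add]
    congr 1
    rw [add_assoc, Nat.sub_add_cancel hkl]
    obtain ⟨c', rfl⟩ : ∃ c', c = c' + 1 := ⟨c - 1, by omega⟩
    simp only [Nat.add_sub_cancel]
    ring


lemma sum_prod_pi {ι : Type*} [Fintype ι] [DecidableEq ι] {κ : ι → Type*}
    [∀ i, Fintype (κ i)] (F : ∀ i, κ i → ℝ) :
    (∑ x : (∀ i, κ i), ∏ i, F i (x i)) = ∏ i, ∑ y, F i y := by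
  rw [Finset.prod_univ_sum, Fintype.piFinset_univ]

set_option maxHeartbeats 1000000 in
lemma sum_sum_prod_pi {ι A B : Type*} [Fintype ι] [DecidableEq ι] [Fintype A] [Fintype B]
    (G : ι → A → B → ℝ) :
    (∑ f : ι → A, ∑ z : ι → B, ∏ i, G i (f i) (z i)) = ∏ i, ∑ fi : A, ∑ zi : B, G i fi zi := by
  calc (∑ f : ι → A, ∑ z : ι → B, ∏ i, G i (f i) (z i))
      = ∑ f : ι → A, ∏ i, ∑ zi : B, G i (f i) zi :=
        Finset.sum_congr rfl
          (fun f _ => sum_prod_pi (κ := fun _ => B) (fun i zi => G i (f i) zi))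
    _ = ∏ i, ∑ fi : A, ∑ zi : B, G i fi zi :=
        sum_prod_pi (κ := fun _ => A) (fun i fi => ∑ zi : B, G i fi zi)

lemma per_g {d : ℕ} (wf : Fin d → (U → Fin m) → ℝ) (hwf : ∀ i, twoWiseIndep (wf i))
    (T : Finset U) (a : U → Fin d → Fin m) (g : Fin c → U → Fin ℓ) (j₀ : Fin c)
    (hg : T.card ≤ (T.image (g j₀)).card + 1) :
    ∑ f : Fin d → U → Fin m, ∑ z : Fin d → Fin c → Fin ℓ → Fin m,
      (∏ i, wf i (f i)) *
        (if ∀ x ∈ T, ∀ i, f i x + ∑ j, z i j (g j x) = a x i then (1:ℝ) else 0)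
    = ((m:ℝ) ^ (c*ℓ) * (1/(m:ℝ)) ^ T.card) ^ d := by
  classical
  have hre : ∀ (f : Fin d → U → Fin m) (z : Fin d → Fin c → Fin ℓ → Fin m),
      (∏ i, wf i (f i)) *
        (if ∀ x ∈ T, ∀ i, f i x + ∑ j, z i j (g j x) = a x i then (1:ℝ) else 0)
      = ∏ i, (wf i (f i) *
          (if ∀ x ∈ T, f i x + ∑ j, z i j (g j x) = a x i then (1:ℝ) else 0)) := by
    intro f z
    rw [Finset.prod_mul_distrib]
    congr 1
    rw [if_congr (show (∀ x ∈ T, ∀ i, f i x + ∑ j, z i j (g j x) = a x i)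
        ↔ (∀ i, ∀ x ∈ T, f i x + ∑ j, z i j (g j x) = a x i)
      from ⟨fun h i x hx => h x hx i, fun h x hx i => h i x hx⟩) rfl rfl]
    by_cases h : ∀ i, ∀ x ∈ T, f i x + ∑ j, z i j (g j x) = a x i
    · rw [if_pos h, eq_comm, Finset.prod_congr rfl (fun i _ => if_pos (h i)),
        Finset.prod_const_one]
    · rw [if_neg h, eq_comm]
      push_neg at h
      obtain ⟨i, x, hx, hne⟩ := h
      exact Finset.prod_eq_zero (Finset.mem_univ i)
        (by rw [if_neg]; intro hh; exact hne (hh x hx))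
  simp only [hre]
  rw [sum_sum_prod_pi (fun (i : Fin d) (fi : U → Fin m) (zi : Fin c → Fin ℓ → Fin m) =>
    wf i fi * (if ∀ x ∈ T, fi x + ∑ j, zi j (g j x) = a x i then (1:ℝ) else 0))]
  rw [Finset.prod_congr rfl
    (fun i _ => core_sum (wf i) (hwf i) T g j₀ hg (fun x => a x i)),
    Finset.prod_const, Finset.card_univ, Fintype.card_fin]

end Core

/-- Conditioned on `good_T`, the hash values
`(h_1(x),…,h_d(x))_{x ∈ T}` are uniformly distributed on `([m]^d)^T`:
for every target `a` the probability of `good_T ∧ (h-values = a on T)` equals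
`P(good_T) · m^{-d·|T|}`. -/
theorem hash_values_uniform_on_goodT
    {U : Type*} [Fintype U] [DecidableEq U] (m ℓ d c : ℕ) [NeZero m] [NeZero ℓ]
    (hd : 2 ≤ d) (hc : 1 ≤ c)
    (wf : Fin d → (U → Fin m) → ℝ) (wg : Fin c → (U → Fin ℓ) → ℝ)
    (hwf : ∀ i, twoWiseIndep (wf i)) (hwg : ∀ j, twoUniversal (wg j))
    (T : Finset U) (a : U → Fin d → Fin m) :
    Pr (hashWeight wf wg) (fun ω => goodT T ω ∧ ∀ x ∈ T, ∀ i, hashFun ω i x = a x i) =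
      Pr (hashWeight wf wg) (goodT T) * (1 / (m : ℝ)) ^ (d * T.card) := by
  classical
  have hm : (m:ℝ) ≠ 0 := Nat.cast_ne_zero.2 (NeZero.ne m)
  have hZc : (Fintype.card (Fin d → Fin c → Fin ℓ → Fin m)) = ((m^ℓ)^c)^d := by
    simp [Fintype.card_fun]
  have hfs : ∑ f : Fin d → U → Fin m, ∏ i, wf i (f i) = 1 := by
    rw [sum_prod_pi (κ := fun _ => U → Fin m) wf,
      Finset.prod_congr rfl (fun i _ => (hwf i).2.1), Finset.prod_const_one]
  unfold Pr
  rw [Finset.sum_filter, Finset.sum_filter]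
  simp only [Fintype.sum_prod_type, hashWeight, goodT, hashFun]
  conv_lhs => rw [Finset.sum_comm]
  conv_rhs => rw [Finset.sum_comm, Finset.sum_mul]
  apply Finset.sum_congr rfl
  intro g _
  by_cases hg : ∃ j : Fin c, T.card ≤ (T.image (g j)).card + 1
  · obtain ⟨j₀, hj₀⟩ := hg
    have hg' : ∃ j : Fin c, T.card ≤ (T.image (g j)).card + 1 := ⟨j₀, hj₀⟩
    simp only [hg', true_and, if_true]
    have l1 : ∀ (fv : Fin d → U → Fin m) (zv : Fin d → Fin c → Fin ℓ → Fin m),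
        (if (∀ x ∈ T, ∀ i, fv i x + ∑ j, zv i j (g j x) = a x i)
          then (∏ i, wf i (fv i)) * (∏ j, wg j (g j)) *
            (1 / (Fintype.card (Fin d → Fin c → Fin ℓ → Fin m) : ℝ)) else 0)
        = ((∏ j, wg j (g j)) *
            (1 / (Fintype.card (Fin d → Fin c → Fin ℓ → Fin m) : ℝ))) *
          ((∏ i, wf i (fv i)) *
            (if (∀ x ∈ T, ∀ i, fv i x + ∑ j, zv i j (g j x) = a x i) then (1:ℝ) else 0)) := by
      intro fv zv
      split_ifs <;> ring
    have key : ((m:ℝ)^(c*ℓ) * (1/(m:ℝ))^T.card)^d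
        = ((Fintype.card (Fin d → Fin c → Fin ℓ → Fin m)) : ℝ) * (1/(m:ℝ))^(d*T.card) := by
      rw [hZc]
      push_cast
      rw [mul_pow, ← pow_mul, ← pow_mul, Nat.mul_comm c ℓ, pow_mul, pow_mul,
        Nat.mul_comm T.card d]
    have l2 : (∑ f : Fin d → U → Fin m, ∑ z : Fin d → Fin c → Fin ℓ → Fin m,
        if (∀ x ∈ T, ∀ i, f i x + ∑ j, z i j (g j x) = a x i)
        then (∏ i, wf i (f i)) * (∏ j, wg j (g j)) *
          (1 / (Fintype.card (Fin d → Fin c → Fin ℓ → Fin m) : ℝ)) else 0)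
        = ((∏ j, wg j (g j)) * (1 / (Fintype.card (Fin d → Fin c → Fin ℓ → Fin m) : ℝ))) *
          ∑ f : Fin d → U → Fin m, ∑ z : Fin d → Fin c → Fin ℓ → Fin m,
            (∏ i, wf i (f i)) *
              (if (∀ x ∈ T, ∀ i, f i x + ∑ j, z i j (g j x) = a x i) then (1:ℝ) else 0) := by
      rw [Finset.mul_sum]
      refine Finset.sum_congr rfl fun f _ => ?_
      rw [Finset.mul_sum]
      exact Finset.sum_congr rfl fun z _ => l1 f z
    rw [l2, per_g wf hwf T a g j₀ hj₀, key]
    have r2 : (∑ f : Fin d → U → Fin m, ∑ _z : Fin d → Fin c → Fin ℓ → Fin m,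
        ((∏ i, wf i (f i)) * (∏ j, wg j (g j))) *
          (1 / (Fintype.card (Fin d → Fin c → Fin ℓ → Fin m) : ℝ)))
        = ((Fintype.card (Fin d → Fin c → Fin ℓ → Fin m) : ℝ) * (∏ j, wg j (g j)) *
            (1 / (Fintype.card (Fin d → Fin c → Fin ℓ → Fin m) : ℝ))) := by
      rw [Finset.sum_congr rfl (fun f _ => by
        rw [Finset.sum_const, Finset.card_univ, nsmul_eq_mul,
          show ((Fintype.card (Fin d → Fin c → Fin ℓ → Fin m) : ℝ)) *
              (((∏ i, wf i (f i)) * (∏ j, wg j (g j))) *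
                (1 / (Fintype.card (Fin d → Fin c → Fin ℓ → Fin m) : ℝ)))
            = ((Fintype.card (Fin d → Fin c → Fin ℓ → Fin m) : ℝ) * (∏ j, wg j (g j)) *
                (1 / (Fintype.card (Fin d → Fin c → Fin ℓ → Fin m) : ℝ))) * (∏ i, wf i (f i))
          from by ring]), ← Finset.mul_sum, hfs, mul_one]
    rw [r2]
    ring
  · simp only [hg, false_and, if_false, Finset.sum_const_zero, zero_mul]
end

section
/- Every hypertree or unicyclic connected hypergraph with at least one edge contains an edge incident to a vertex of degree 1; consequently, iteratively removing edges incident to degree-1 vertices (the peeling process) empties such a component. -/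
open Finset

/-- Two hyperedges are adjacent within `F` if both lie in `F` and share a
vertex; `edgeConn mem F` says every two edges of `F` are linked by a hyperpath. -/
def edgeConn {V E : Type*} [DecidableEq V] (mem : E → Finset V) (F : Finset E) : Prop :=
  ∀ e ∈ F, ∀ e' ∈ F,
    Relation.ReflTransGen (fun a b => a ∈ F ∧ b ∈ F ∧ (mem a ∩ mem b).Nonempty) e e'

section Aux

variable {V E : Type*} [Fintype V] [Fintype E] [DecidableEq V] [DecidableEq E]
  (mem : E → Finset V)

/-- Counting: a subset with bipartite-excess at most its size and edges of
size ≥ 3 has an edge with a private (degree-1) vertex. -/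
lemma peel_exists (hsize : ∀ e, 3 ≤ (mem e).card) (S : Finset E) (hS : S.Nonempty)
    (hex : ∑ e ∈ S, (mem e).card ≤ (S.biUnion mem).card + S.card) :
    ∃ e ∈ S, ∃ v ∈ mem e, ∀ e' ∈ S, e' ≠ e → v ∉ mem e' := by
  by_contra hcon
  push_neg at hcon
  set U := S.biUnion mem with hU
  have hdeg : ∀ v ∈ U, 2 ≤ (S.filter (fun e => v ∈ mem e)).card := by
    intro v hv
    rw [hU, Finset.mem_biUnion] at hv
    obtain ⟨e0, he0, hve0⟩ := hv
    obtain ⟨e1, he1, hne, hve1⟩ := hcon e0 he0 v hve0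
    refine Finset.one_lt_card.mpr ⟨e0, ?_, e1, ?_, fun h => hne h.symm⟩
    · simp [he0, hve0]
    · simp [he1, hve1]
  have hcount : ∑ e ∈ S, (mem e).card = ∑ v ∈ U, (S.filter (fun e => v ∈ mem e)).card := by
    have h1 : ∀ e ∈ S, (mem e).card = ∑ v ∈ U, (if v ∈ mem e then 1 else 0) := by
      intro e he
      have hfe : U.filter (fun v => v ∈ mem e) = mem e := by
        ext v
        simp only [Finset.mem_filter]
        constructor
        · rintro ⟨-, hv⟩; exact hv
        · intro hv; exact ⟨Finset.mem_biUnion.mpr ⟨e, he, hv⟩, hv⟩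
      rw [← hfe, Finset.card_filter]
      exact Finset.sum_congr rfl fun v _ => by rw [hfe]
    calc ∑ e ∈ S, (mem e).card = ∑ e ∈ S, ∑ v ∈ U, (if v ∈ mem e then 1 else 0) :=
          Finset.sum_congr rfl h1
      _ = ∑ v ∈ U, ∑ e ∈ S, (if v ∈ mem e then 1 else 0) := Finset.sum_comm
      _ = ∑ v ∈ U, (S.filter (fun e => v ∈ mem e)).card := by
          refine Finset.sum_congr rfl fun v _ => ?_
          rw [Finset.card_filter]
  have h2 : 2 * U.card ≤ ∑ e ∈ S, (mem e).card := by
    rw [hcount]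
    calc 2 * U.card = ∑ _v ∈ U, 2 := by rw [Finset.sum_const, smul_eq_mul, mul_comm]
      _ ≤ _ := Finset.sum_le_sum hdeg
  have h3 : 3 * S.card ≤ ∑ e ∈ S, (mem e).card := by
    calc 3 * S.card = ∑ _e ∈ S, 3 := by rw [Finset.sum_const, smul_eq_mul, mul_comm]
      _ ≤ _ := Finset.sum_le_sum fun e _ => hsize e
  have hpos : 1 ≤ S.card := Finset.Nonempty.card_pos hS
  omega

/-- From an edge-connected family, find an edge outside `S` touching `S`. -/
lemma cross_exists (hconn : edgeConn mem Finset.univ) (S : Finset E) (hS : S.Nonempty)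
    (hSu : S ≠ Finset.univ) :
    ∃ b ∉ S, (mem b ∩ S.biUnion mem).Nonempty := by
  obtain ⟨s, hs⟩ := hS
  obtain ⟨t, ht⟩ : ∃ t, t ∉ S := by
    by_contra h
    push_neg at h
    exact hSu (Finset.eq_univ_iff_forall.mpr h)
  have hpath := hconn s (Finset.mem_univ s) t (Finset.mem_univ t)
  have key : ∀ {x y : E},
      Relation.ReflTransGen
        (fun a b => a ∈ (Finset.univ : Finset E) ∧ b ∈ (Finset.univ : Finset E)
          ∧ (mem a ∩ mem b).Nonempty) x y →
      x ∈ S → y ∉ S → ∃ a ∈ S, ∃ b ∉ S, (mem a ∩ mem b).Nonempty := by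
    intro x y h
    induction h with
    | refl => intro hx hy; exact absurd hx hy
    | tail _hxc hcy ih =>
      intro hx hy
      rename_i c _
      by_cases hc : c ∈ S
      · exact ⟨c, hc, _, hy, hcy.2.2⟩
      · exact ih hx hc
  obtain ⟨a, ha, b, hb, v, hv⟩ := key hpath hs ht
  rw [Finset.mem_inter] at hv
  exact ⟨b, hb, v, Finset.mem_inter.mpr ⟨hv.2, Finset.mem_biUnion.mpr ⟨a, ha, hv.1⟩⟩⟩

/-- Connectivity counting: subset excess controlled by global excess. -/
lemma excess_mono (hconn : edgeConn mem Finset.univ) :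
    ∀ (n : ℕ) (S : Finset E), (Finset.univ \ S).card ≤ n → S.Nonempty →
      ∑ e ∈ S, (mem e).card + ((Finset.univ : Finset E).biUnion mem).card + Fintype.card E
        ≤ (∑ e : E, (mem e).card) + (S.biUnion mem).card + S.card := by
  intro n
  induction n with
  | zero =>
    intro S hcard _
    have : S = Finset.univ := by
      have : Finset.univ \ S = ∅ := Finset.card_eq_zero.mp (Nat.le_zero.mp hcard)
      have hsub : (Finset.univ : Finset E) ⊆ S := fun x hx => by
        by_contra hxs
        exact absurd (Finset.mem_sdiff.mpr ⟨hx, hxs⟩) (by simp [this])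
      exact (Finset.eq_univ_iff_forall.mpr fun x => hsub (Finset.mem_univ x))
    subst this
    rw [Finset.card_univ]
  | succ n ih =>
    intro S hcard hS
    by_cases hSu : S = Finset.univ
    · subst hSu
      rw [Finset.card_univ]
    · obtain ⟨b, hb, hbU⟩ := cross_exists mem hconn S hS hSu
      have hsmall : (Finset.univ \ insert b S).card ≤ n := by
        have h1 : Finset.univ \ insert b S = (Finset.univ \ S).erase b := by
          ext x
          simp only [Finset.mem_sdiff, Finset.mem_erase, Finset.mem_insert,
            Finset.mem_univ, true_and]
          tauto
        have hbmem : b ∈ Finset.univ \ S := Finset.mem_sdiff.mpr ⟨Finset.mem_univ b, hb⟩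
        rw [h1, Finset.card_erase_of_mem hbmem]
        omega
      have hIH := ih (insert b S) hsmall ⟨b, Finset.mem_insert_self b S⟩
      rw [Finset.sum_insert hb, Finset.biUnion_insert, Finset.card_insert_of_notMem hb] at hIH
      have hcup : (mem b ∪ S.biUnion mem).card + 1 ≤ (mem b).card + (S.biUnion mem).card := by
        have := Finset.card_union_add_card_inter (mem b) (S.biUnion mem)
        have hone : 1 ≤ (mem b ∩ S.biUnion mem).card := Finset.Nonempty.card_pos hbU
        omega
      omega

/-- Ordering construction: builds a peeling list. -/
lemma peel_list (hpriv : ∀ S : Finset E, S.Nonempty →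
      ∃ e ∈ S, ∃ v ∈ mem e, ∀ e' ∈ S, e' ≠ e → v ∉ mem e') :
    ∀ (n : ℕ) (S : Finset E), S.card ≤ n →
      ∃ L : List E, L.Nodup ∧ (∀ e, e ∈ L ↔ e ∈ S) ∧
        ∀ (i : ℕ) (hi : i < L.length), ∃ v ∈ mem (L.get ⟨i, hi⟩),
          ∀ e' ∈ L.drop (i + 1), v ∉ mem e' := by
  intro n
  induction n with
  | zero =>
    intro S hcard
    have : S = ∅ := Finset.card_eq_zero.mp (Nat.le_zero.mp hcard)
    subst this
    exact ⟨[], List.nodup_nil, by simp, by intro i hi; simp at hi⟩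
  | succ n ih =>
    intro S hcard
    rcases S.eq_empty_or_nonempty with rfl | hS
    · exact ⟨[], List.nodup_nil, by simp, by intro i hi; simp at hi⟩
    · obtain ⟨e, heS, v, hv, hpr⟩ := hpriv S hS
      obtain ⟨L, hnd, hmem, hpeel⟩ := ih (S.erase e) (by
        rw [Finset.card_erase_of_mem heS]
        have := Finset.Nonempty.card_pos hS
        omega)
      have heL : e ∉ L := fun h => by
        have := (hmem e).mp h
        exact absurd rfl (Finset.mem_erase.mp this).1
      refine ⟨e :: L, List.nodup_cons.mpr ⟨heL, hnd⟩, ?_, ?_⟩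
      · intro x
        simp only [List.mem_cons, hmem x, Finset.mem_erase]
        constructor
        · rintro (rfl | ⟨-, hx⟩) <;> [exact heS; exact hx]
        · intro hx
          by_cases hxe : x = e
          · exact Or.inl hxe
          · exact Or.inr ⟨hxe, hx⟩
      · intro i hi
        match i with
        | 0 =>
          refine ⟨v, hv, ?_⟩
          intro e' he'
          simp only [List.drop_succ_cons, List.drop_zero] at he'
          have := (hmem e').mp he'
          rw [Finset.mem_erase] at this
          exact hpr e' this.2 this.1
        | (j+1) =>
          have hj : j < L.length := by simpa using hi
          obtain ⟨w, hw, hwp⟩ := hpeel j hj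
          exact ⟨w, hw, by simpa using hwp⟩

end Aux

/-- A connected hypergraph (with edges of size ≥ 3, as in the
paper's `d`-uniform setting with `d ≥ 3`) that is a hypertree or unicyclic —
i.e. its bipartite representation has at most as many edges (`∑_e |e|`) as
vertices (`|⋃E| + |E|`, cyclomatic number ≤ 1) — and has at least one edge
contains an edge incident to a vertex of degree 1; consequently the peeling
process (repeatedly removing an edge incident to a degree-1 vertex) empties it:
the edges can be ordered so that each edge has a vertex in no later edge. -/
theorem hypertree_or_unicyclic_peeling
    {V E : Type*} [Fintype V] [Fintype E] [DecidableEq V] [DecidableEq E]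
    (mem : E → Finset V) (hne : Nonempty E)
    (hsize : ∀ e, 3 ≤ (mem e).card)
    (hconn : edgeConn mem (Finset.univ : Finset E))
    (huni : ∑ e : E, (mem e).card ≤
      ((Finset.univ : Finset E).biUnion mem).card + Fintype.card E) :
    (∃ e : E, ∃ v ∈ mem e, ∀ e' : E, e' ≠ e → v ∉ mem e') ∧
    ∃ ord : Fin (Fintype.card E) ≃ E, ∀ j : Fin (Fintype.card E),
      ∃ v ∈ mem (ord j), ∀ k : Fin (Fintype.card E), j < k → v ∉ mem (ord k) := by
  have huniv : (Finset.univ : Finset E).Nonempty := Finset.univ_nonempty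
  have hpriv : ∀ S : Finset E, S.Nonempty →
      ∃ e ∈ S, ∃ v ∈ mem e, ∀ e' ∈ S, e' ≠ e → v ∉ mem e' := by
    intro S hS
    apply peel_exists mem hsize S hS
    have hA := excess_mono mem hconn (Finset.univ \ S).card S le_rfl hS
    have h2 : ∑ e ∈ S, (mem e).card + (((Finset.univ : Finset E).biUnion mem).card
        + Fintype.card E) ≤ (S.biUnion mem).card + S.card
        + (((Finset.univ : Finset E).biUnion mem).card + Fintype.card E) := by
      calc ∑ e ∈ S, (mem e).card + (((Finset.univ : Finset E).biUnion mem).card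
            + Fintype.card E)
          = ∑ e ∈ S, (mem e).card + ((Finset.univ : Finset E).biUnion mem).card
            + Fintype.card E := by ring
        _ ≤ (∑ e : E, (mem e).card) + (S.biUnion mem).card + S.card := hA
        _ ≤ (((Finset.univ : Finset E).biUnion mem).card + Fintype.card E)
            + (S.biUnion mem).card + S.card := by
              exact Nat.add_le_add_right (Nat.add_le_add_right huni _) _
        _ = (S.biUnion mem).card + S.card + (((Finset.univ : Finset E).biUnion mem).card
            + Fintype.card E) := by ring
    exact Nat.le_of_add_le_add_right h2
  constructor
  · obtain ⟨e, -, v, hv, hp⟩ := hpriv Finset.univ huniv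
    exact ⟨e, v, hv, fun e' hne' => hp e' (Finset.mem_univ e') hne'⟩
  · obtain ⟨L, hnd, hmem, hpeel⟩ := peel_list mem hpriv (Finset.univ : Finset E).card
      Finset.univ le_rfl
    have hforall : ∀ x, x ∈ L := fun x => (hmem x).mpr (Finset.mem_univ x)
    have hlen : L.length = Fintype.card E := by
      rw [← List.toFinset_card_of_nodup hnd, ← Finset.card_univ]
      congr 1
      ext x
      simp [hforall x]
    let eqv : Fin L.length ≃ E := hnd.getEquivOfForallMemList L hforall
    refine ⟨(finCongr hlen).symm.trans eqv, ?_⟩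
    have hord : ∀ j : Fin (Fintype.card E),
        ((finCongr hlen).symm.trans eqv) j = L.get ⟨j.val, by rw [hlen]; exact j.isLt⟩ := by
      intro j
      simp [eqv, List.Nodup.getEquivOfForallMemList, finCongr]
    intro j
    have hj : (j : ℕ) < L.length := by rw [hlen]; exact j.isLt
    obtain ⟨v, hv, hvp⟩ := hpeel j.val hj
    refine ⟨v, by rw [hord j]; exact hv, ?_⟩
    intro k hk
    rw [hord k]
    apply hvp
    have hk' : (k : ℕ) < L.length := by rw [hlen]; exact k.isLt
    have hsplit : (j : ℕ) + 1 + ((k : ℕ) - ((j : ℕ) + 1)) = (k : ℕ) := by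
      have : (j : ℕ) < (k : ℕ) := hk
      omega
    have hlt : (k : ℕ) - ((j : ℕ) + 1) < (L.drop ((j : ℕ) + 1)).length := by
      rw [List.length_drop]
      omega
    have : L.get ⟨(k : ℕ), hk'⟩ = (L.drop ((j : ℕ) + 1)).get ⟨(k : ℕ) - ((j : ℕ) + 1), hlt⟩ := by
      simp only [List.get_eq_getElem, List.getElem_drop]
      congr 1
      omega
    rw [this]
    exact List.get_mem _ ⟨_, hlt⟩
end
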